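/- arXiv:0903.1041 — 5 statements merged into one kernel-verified Lean document; each statement's English description precedes it below -/
import Mathlib

section
/- If P(z) is a polynomial of degree n ≥ 1 with complex coefficients, then max_{|z|=1} |P'(z)| ≤ n · max_{|z|=1} |P(z)|. -/
open Polynomial Complex

/-- The maximum of `|P(w)|` over the unit circle `|w| = 1`. -/
noncomputable def maxMod (P : Polynomial ℂ) : ℝ :=
  sSup ((fun w => ‖P.eval w‖) '' {w : ℂ | ‖w‖ = 1})

lemma circle_eq_sphere : {w : ℂ | ‖w‖ = 1} = Metric.sphere (0:ℂ) 1 := by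
  ext w; simp [mem_sphere_zero_iff_norm]

lemma maxMod_ub (P : Polynomial ℂ) (w : ℂ) (hw : ‖w‖ = 1) :
    ‖P.eval w‖ ≤ maxMod P := by
  apply le_csSup
  · rw [circle_eq_sphere]
    exact ((isCompact_sphere (0:ℂ) 1).image
      (continuous_norm.comp P.continuous)).bddAbove
  · exact ⟨w, hw, rfl⟩

lemma maxMod_nonneg (P : Polynomial ℂ) : 0 ≤ maxMod P :=
  le_trans (norm_nonneg _) (maxMod_ub P 1 (by simp))

lemma reverse_bound (P : Polynomial ℂ) (z : ℂ) (hz : ‖z‖ ≤ 1) :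
    ‖(Polynomial.reverse P).eval z‖ ≤ maxMod P := by
  have := Complex.norm_le_of_forall_mem_frontier_norm_le (f := fun z => (Polynomial.reverse P).eval z)
    (U := Metric.ball (0:ℂ) 1) Metric.isBounded_ball
    ((Polynomial.reverse P).differentiable.diffContOnCl)
    (C := maxMod P) ?_ (z := z) ?_
  · exact this
  · intro x hx
    rw [frontier_ball 0 one_ne_zero, mem_sphere_zero_iff_norm] at hx
    have hx1 : ‖x‖ = 1 := hx
    have hx0 : x ≠ 0 := by intro h; rw [h] at hx1; simp at hx1
    have hxi : x⁻¹ ≠ 0 := inv_ne_zero hx0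
    haveI := invertibleOfNonzero hxi
    have key := Polynomial.eval₂_reverse_mul_pow (RingHom.id ℂ) (x⁻¹) P
    rw [invOf_eq_inv, inv_inv] at key
    rw [show eval₂ (RingHom.id ℂ) = Polynomial.eval from rfl] at key
    have habs : ‖(Polynomial.reverse P).eval x‖ * ‖x⁻¹‖ ^ P.natDegree
        = ‖P.eval x⁻¹‖ := by
      rw [← norm_pow, ← norm_mul, key]
    have hxinv1 : ‖x⁻¹‖ = 1 := by rw [norm_inv, hx1]; norm_num
    rw [hxinv1, one_pow, mul_one] at habs
    rw [habs]
    exact maxMod_ub P _ hxinv1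
  · rw [closure_ball 0 one_ne_zero, mem_closedBall_zero_iff]
    exact hz

lemma growth_bound (P : Polynomial ℂ) (w : ℂ) (hw : 1 ≤ ‖w‖) :
    ‖P.eval w‖ ≤ maxMod P * ‖w‖ ^ P.natDegree := by
  have hw0 : w ≠ 0 := by
    intro h; rw [h] at hw; simp at hw; linarith
  haveI := invertibleOfNonzero hw0
  have key := Polynomial.eval₂_reverse_mul_pow (RingHom.id ℂ) w P
  rw [invOf_eq_inv] at key
  rw [show eval₂ (RingHom.id ℂ) = Polynomial.eval from rfl] at key
  rw [← key, norm_mul, norm_pow]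
  have h1 : ‖w⁻¹‖ ≤ 1 := by
    rw [norm_inv]
    exact inv_le_one_of_one_le₀ hw
  exact mul_le_mul_of_nonneg_right (reverse_bound P _ h1) (by positivity)

lemma leadingCoeff_bound (P : Polynomial ℂ) :
    ‖P.leadingCoeff‖ ≤ maxMod P := by
  have := reverse_bound P 0 (by simp)
  rwa [← Polynomial.coeff_zero_eq_eval_zero, Polynomial.coeff_zero_reverse] at this

lemma key_lemma (w : ℂ) (hw : 1 ≤ ‖w‖) :
    ∀ (s : Multiset ℂ), (∀ r ∈ s, ‖r‖ < 1) →
      eval w ((s.map (fun r => X - C r)).prod) ≠ 0 ∧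
      0 ≤ (w * eval w (derivative ((s.map (fun r => X - C r)).prod)) *
        (starRingEnd ℂ) (eval w ((s.map (fun r => X - C r)).prod))).re ∧
      (s ≠ 0 → 0 < (w * eval w (derivative ((s.map (fun r => X - C r)).prod)) *
        (starRingEnd ℂ) (eval w ((s.map (fun r => X - C r)).prod))).re) := by
  intro s
  induction s using Multiset.induction_on with
  | empty => intro _; refine ⟨by simp, by simp, fun h => absurd rfl h⟩
  | cons r t ih =>
    intro hs
    have hr : ‖r‖ < 1 := hs r (Multiset.mem_cons_self r t)
    obtain ⟨he, hre, _⟩ := ih (fun x hx => hs x (Multiset.mem_cons_of_mem hx))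
    set gt := (t.map (fun r => X - C r)).prod with hgt
    have hprod : ((r ::ₘ t).map (fun r => X - C r)).prod = (X - C r) * gt := by
      rw [Multiset.map_cons, Multiset.prod_cons]
    have hwr : w - r ≠ 0 := by
      intro h
      have : ‖w‖ = ‖r‖ := by rw [sub_eq_zero] at h; rw [h]
      linarith
    have hd : derivative ((X - C r) * gt) = gt + (X - C r) * derivative gt := by
      rw [derivative_mul, derivative_sub, derivative_X, derivative_C, sub_zero, one_mul]
    have hposre : 0 < (w * (starRingEnd ℂ) (w - r)).re := by
      have h1 : (w * (starRingEnd ℂ) (w - r)).re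
          = Complex.normSq w - (w * (starRingEnd ℂ) r).re := by
        rw [map_sub, mul_sub, Complex.sub_re, Complex.mul_conj, Complex.ofReal_re]
      have h2 : (w * (starRingEnd ℂ) r).re ≤ ‖w‖ * ‖r‖ := by
        calc (w * (starRingEnd ℂ) r).re ≤ ‖w * (starRingEnd ℂ) r‖ :=
              Complex.re_le_norm _
          _ = ‖w‖ * ‖r‖ := by rw [norm_mul, Complex.norm_conj]
      have h4 : Complex.normSq w = ‖w‖ * ‖w‖ := by
        rw [Complex.normSq_eq_norm_sq]; ring
      rw [h1, h4]
      nlinarith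
    have habs2 : (0:ℝ) < Complex.normSq (eval w gt) := Complex.normSq_pos.mpr he
    have key : (w * eval w (derivative ((X - C r) * gt)) *
        (starRingEnd ℂ) (eval w ((X - C r) * gt))).re
        = Complex.normSq (eval w gt) * (w * (starRingEnd ℂ) (w - r)).re
          + Complex.normSq (w - r) *
            (w * eval w (derivative gt) * (starRingEnd ℂ) (eval w gt)).re := by
      rw [hd]
      have : w * eval w (gt + (X - C r) * derivative gt) *
          (starRingEnd ℂ) (eval w ((X - C r) * gt))
          = (↑(Complex.normSq (eval w gt)) : ℂ) * (w * (starRingEnd ℂ) (w - r))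
            + (↑(Complex.normSq (w - r)) : ℂ) *
              (w * eval w (derivative gt) * (starRingEnd ℂ) (eval w gt)) := by
        rw [← Complex.mul_conj (eval w gt), ← Complex.mul_conj (w - r)]
        simp only [eval_add, eval_mul, eval_sub, eval_X, eval_C, map_mul, map_sub]
        ring
      rw [this, Complex.add_re, Complex.re_ofReal_mul, Complex.re_ofReal_mul]
    have hpos : 0 < (w * eval w (derivative ((X - C r) * gt)) *
        (starRingEnd ℂ) (eval w ((X - C r) * gt))).re := by
      rw [key]
      have h5 : (0:ℝ) ≤ Complex.normSq (w - r) := Complex.normSq_nonneg _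
      nlinarith
    refine ⟨?_, ?_, ?_⟩
    · rw [hprod]; simp only [eval_mul, eval_sub, eval_X, eval_C]
      exact mul_ne_zero hwr he
    · rw [hprod]; exact le_of_lt hpos
    · intro _; rw [hprod]; exact hpos

/-- Bernstein's inequality: if `P` has degree `n ≥ 1`, then
`max_{|z|=1} |P'(z)| ≤ n · max_{|z|=1} |P(z)|`. -/
theorem bernstein_inequality (P : Polynomial ℂ) (n : ℕ) (hn : 1 ≤ n)
    (hdeg : P.natDegree = n) :
    ∀ z : ℂ, ‖z‖ = 1 →
      ‖(Polynomial.derivative P).eval z‖ ≤ n * maxMod P := by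
  intro z hz
  set M := maxMod P with hM
  have hM0 : 0 ≤ M := maxMod_nonneg P
  have hz1 : (1:ℝ) ≤ ‖z‖ := le_of_eq hz.symm
  have hz0 : z ≠ 0 := by intro h; rw [h] at hz; simp at hz
  -- suffices to prove with M replaced by M + ε
  have main : ∀ ε : ℝ, 0 < ε →
      ‖(Polynomial.derivative P).eval z‖ ≤ n * (M + ε) := by
    intro ε hε
    set M' := M + ε with hM'
    have hM'pos : 0 < M' := by linarith
    -- Claim: for |λ| > 1, P'(z) ≠ λ * (M' * n) * z^(n-1)
    have claim : ∀ lam : ℂ, 1 < ‖lam‖ →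
        (Polynomial.derivative P).eval z ≠ lam * ((M':ℂ) * n) * z^(n-1) := by
      intro lam hlam heq
      set f : Polynomial ℂ := P - Polynomial.C (lam * M') * Polynomial.X ^ n with hf
      have hcoeffn : f.coeff n = P.coeff n - lam * M' := by
        rw [hf, Polynomial.coeff_sub, Polynomial.coeff_C_mul, Polynomial.coeff_X_pow]
        simp
      have han : ‖P.coeff n‖ ≤ M := by
        have := leadingCoeff_bound P
        rwa [Polynomial.leadingCoeff, hdeg] at this
      have habs_lam : M' < ‖lam * M'‖ := by
        rw [norm_mul, Complex.norm_real, Real.norm_eq_abs, abs_of_pos hM'pos]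
        nlinarith
      have hcoeff_ne : f.coeff n ≠ 0 := by
        rw [hcoeffn, sub_ne_zero]
        intro h
        rw [← h] at habs_lam
        linarith
      have hf0 : f ≠ 0 := fun h => hcoeff_ne (by simp [h])
      have hfdeg : f.natDegree = n := by
        apply le_antisymm
        · apply le_trans (Polynomial.natDegree_sub_le _ _)
          apply max_le (le_of_eq hdeg)
          exact le_trans (Polynomial.natDegree_C_mul_le _ _)
            (le_of_eq (Polynomial.natDegree_X_pow n))
        · exact Polynomial.le_natDegree_of_ne_zero hcoeff_ne
      have hsplits := IsAlgClosed.splits f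
      have hcard : f.roots.card = n := by
        have := hsplits.natDegree_eq_card_roots
        rw [hfdeg] at this
        exact this.symm
      -- all roots in open unit disk
      have hroots : ∀ r ∈ f.roots, ‖r‖ < 1 := by
        intro r hr
        by_contra hcon
        push_neg at hcon
        have hroot : P.eval r = lam * M' * r ^ n := by
          have h0 := Polynomial.isRoot_of_mem_roots hr
          simp only [Polynomial.IsRoot, hf, Polynomial.eval_sub, Polynomial.eval_mul,
            Polynomial.eval_C, Polynomial.eval_pow, Polynomial.eval_X] at h0
          exact sub_eq_zero.mp h0
        have hgb := growth_bound P r hcon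
        rw [hdeg] at hgb
        have habsr : (0:ℝ) < ‖r‖ ^ n := by positivity
        have heval : ‖P.eval r‖
            = ‖lam‖ * M' * ‖r‖ ^ n := by
          rw [hroot, norm_mul, norm_mul, norm_pow, Complex.norm_real, Real.norm_eq_abs, abs_of_pos hM'pos]
        rw [heval] at hgb
        have hgb2 : ‖lam‖ * M' * ‖r‖ ^ n ≤ M * ‖r‖ ^ n := hgb
        have h1 : M * (‖r‖ ^ n) < M' * (‖r‖ ^ n) := by nlinarith
        have h2 : M' * (‖r‖ ^ n) < ‖lam‖ * M' * (‖r‖ ^ n) := by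
          nlinarith [mul_pos (sub_pos.mpr hlam) (mul_pos hM'pos habsr)]
        linarith
      -- roots nonempty
      have hne0 : f.roots ≠ 0 := by
        intro h0
        rw [h0] at hcard
        simp at hcard
        omega
      obtain ⟨he, _, hposf⟩ := key_lemma z hz1 f.roots hroots
      have hpos' := hposf hne0
      have hd0 : Polynomial.eval z
          (Polynomial.derivative ((f.roots.map (fun r => Polynomial.X - Polynomial.C r)).prod)) ≠ 0 := by
        intro h
        rw [h] at hpos'
        simp at hpos'
      -- factorization
      have hfact := hsplits.eq_prod_roots
      have hlc : f.leadingCoeff ≠ 0 := Polynomial.leadingCoeff_ne_zero.mpr hf0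
      have hder_ne : Polynomial.eval z (Polynomial.derivative f) ≠ 0 := by
        conv_lhs => rw [hfact]
        rw [Polynomial.derivative_C_mul, Polynomial.eval_mul, Polynomial.eval_C]
        exact mul_ne_zero hlc hd0
      -- but the derivative vanishes at z by heq
      apply hder_ne
      rw [hf, Polynomial.derivative_sub, Polynomial.derivative_C_mul,
        Polynomial.derivative_X_pow, Polynomial.eval_sub, Polynomial.eval_mul,
        Polynomial.eval_C, Polynomial.eval_mul, Polynomial.eval_C,
        Polynomial.eval_pow, Polynomial.eval_X, heq]
      push_cast
      ring
    -- use the claim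
    by_contra hgt
    push_neg at hgt
    have hd : ((M':ℂ) * n * z ^ (n-1)) ≠ 0 := by
      apply mul_ne_zero (mul_ne_zero ?_ ?_) (pow_ne_zero _ hz0)
      · exact_mod_cast hM'pos.ne'
      · exact Nat.cast_ne_zero.mpr (by omega)
    have habsd : ‖(M':ℂ) * n * z ^ (n-1)‖ = M' * n := by
      rw [norm_mul, norm_mul, norm_pow, hz, one_pow, mul_one, Complex.norm_real, Real.norm_eq_abs,
        abs_of_pos hM'pos, Complex.norm_natCast]
    set lam : ℂ := (Polynomial.derivative P).eval z / ((M':ℂ) * n * z ^ (n-1)) with hlam_def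
    have hlam1 : 1 < ‖lam‖ := by
      rw [hlam_def, norm_div, habsd]
      rw [lt_div_iff₀ (by positivity), one_mul]
      calc M' * n = n * M' := by ring
        _ < _ := hgt
    have := claim lam hlam1
    apply this
    rw [hlam_def]
    field_simp
    have hM'0 : (M':ℂ) ≠ 0 := by exact_mod_cast hM'pos.ne'
    have hn0 : (n:ℂ) ≠ 0 := Nat.cast_ne_zero.mpr (by omega)
    field_simp
  -- conclude
  have hnpos : (0:ℝ) < n := by exact_mod_cast hn
  by_contra hcon
  push_neg at hcon
  obtain ⟨ε, hε, hlt⟩ : ∃ ε : ℝ, 0 < ε ∧ n * (M + ε) < ‖(Polynomial.derivative P).eval z‖ := by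
    refine ⟨(‖(Polynomial.derivative P).eval z‖ - n * M) / (2 * n),
      div_pos (by linarith) (by positivity), ?_⟩
    have : (n:ℝ) * ((‖(Polynomial.derivative P).eval z‖ - n * M) / (2 * n))
        = (‖(Polynomial.derivative P).eval z‖ - n * M) / 2 := by
      field_simp
    rw [mul_add, this]
    linarith
  exact absurd (main _ hε) (not_le.mpr hlt)
end

section
/- If P(z) is a polynomial of degree n ≥ 1 that has no zeros in the open unit disk |z| < 1, then max_{|z|=1} |P'(z)| ≤ (n/2) · max_{|z|=1} |P(z)|. -/
open Polynomial Complex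

lemma sq_abs_coord (z : ℂ) : ‖z‖ ^ 2 = z.re^2 + z.im^2 := by
  rw [Complex.sq_norm, Complex.normSq_apply]; ring

lemma re_div_named (z a : ℂ) (hne : z ≠ a) (hz : ‖z‖ = 1) :
    (z * (z - a)⁻¹).re = (1 - (z.re*a.re + z.im*a.im)) / Complex.normSq (z - a) := by
  have h1 : z.re^2 + z.im^2 = 1 := by
    have : ‖z‖ ^ 2 = 1 ^ 2 := by rw [hz]
    rw [sq_abs_coord] at this; simpa using this
  rw [← div_eq_mul_inv, Complex.div_re, Complex.sub_re, Complex.sub_im]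
  rw [← add_div]
  congr 1
  nlinarith [h1]

lemma re_term_le {z a : ℂ} (hz : ‖z‖ = 1) (ha : 1 ≤ ‖a‖) (hne : z ≠ a) :
    (z * (z - a)⁻¹).re ≤ 1/2 := by
  have hd : 0 < Complex.normSq (z - a) := by
    rwa [Complex.normSq_pos, sub_ne_zero]
  have hz2 : z.re^2 + z.im^2 = 1 := by
    have : ‖z‖ ^ 2 = 1 ^ 2 := by rw [hz]
    rw [sq_abs_coord] at this; simpa using this
  have ha2 : 1 ≤ a.re^2 + a.im^2 := by
    have := pow_le_pow_left₀ (by positivity) ha 2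
    rw [sq_abs_coord] at this; simpa using this
  rw [re_div_named z a hne hz, div_le_iff₀ hd, Complex.normSq_apply, Complex.sub_re, Complex.sub_im]
  nlinarith

lemma re_term_ge {z a : ℂ} (hz : ‖z‖ = 1) (ha : ‖a‖ ≤ 1) (hne : z ≠ a) :
    1/2 ≤ (z * (z - a)⁻¹).re := by
  have hd : 0 < Complex.normSq (z - a) := by
    rwa [Complex.normSq_pos, sub_ne_zero]
  have hz2 : z.re^2 + z.im^2 = 1 := by
    have : ‖z‖ ^ 2 = 1 ^ 2 := by rw [hz]
    rw [sq_abs_coord] at this; simpa using this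
  have ha2 : a.re^2 + a.im^2 ≤ 1 := by
    have := pow_le_pow_left₀ (norm_nonneg a) ha 2
    rw [sq_abs_coord] at this; simpa using this
  rw [re_div_named z a hne hz, le_div_iff₀ hd, Complex.normSq_apply, Complex.sub_re, Complex.sub_im]
  nlinarith

lemma logderiv_prod (z : ℂ) (m : Multiset ℂ) (h : ∀ a ∈ m, z ≠ a) :
    Polynomial.eval z (Polynomial.derivative (m.map (fun a => X - C a)).prod) =
      Polynomial.eval z (m.map (fun a => X - C a)).prod * (m.map (fun a => (z - a)⁻¹)).sum := by
  induction m using Multiset.induction with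
  | empty => simp
  | cons b s ih =>
    have hb : z - b ≠ 0 := sub_ne_zero.2 (h b (Multiset.mem_cons_self b s))
    have ih' := ih (fun a ha => h a (Multiset.mem_cons_of_mem ha))
    simp only [Multiset.map_cons, Multiset.prod_cons, Multiset.sum_cons,
      derivative_mul, derivative_sub, derivative_X, derivative_C, sub_zero, one_mul,
      eval_add, eval_mul, eval_sub, eval_X, eval_C, ih']
    field_simp

lemma eval_prod_ne_zero (z : ℂ) (m : Multiset ℂ) (h : ∀ a ∈ m, z ≠ a) :
    Polynomial.eval z (m.map (fun a => X - C a)).prod ≠ 0 := by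
  rw [Polynomial.eval_multiset_prod]
  apply Multiset.prod_ne_zero
  intro h0
  rw [Multiset.map_map, Multiset.mem_map] at h0
  obtain ⟨a, ha, he⟩ := h0
  simp only [Function.comp_apply, eval_sub, eval_X, eval_C] at he
  exact sub_ne_zero.2 (h a ha) he

lemma re_msum (m : Multiset ℂ) : m.sum.re = (m.map Complex.re).sum := by
  induction m using Multiset.induction with
  | empty => simp
  | cons b s ih => simp [Complex.add_re, ih]

lemma abs_le_abs_sub {w : ℂ} {t : ℝ} (ht : 0 ≤ t) (h : w.re ≤ t / 2) :
    ‖w‖ ≤ ‖(t : ℂ) - w‖ := by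
  have h1 : ‖w‖ ^ 2 ≤ ‖(t:ℂ) - w‖ ^ 2 := by
    rw [Complex.sq_norm, Complex.sq_norm, Complex.normSq_apply, Complex.normSq_apply,
      Complex.sub_re, Complex.sub_im, Complex.ofReal_re, Complex.ofReal_im]
    nlinarith
  nlinarith [norm_nonneg w, norm_nonneg ((t:ℂ) - w), h1]

lemma abs_sub_le_abs {w : ℂ} {t : ℝ} (ht : 0 ≤ t) (h : t / 2 ≤ w.re) :
    ‖(t : ℂ) - w‖ ≤ ‖w‖ := by
  have h1 : ‖(t:ℂ) - w‖ ^ 2 ≤ ‖w‖ ^ 2 := by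
    rw [Complex.sq_norm, Complex.sq_norm, Complex.normSq_apply, Complex.normSq_apply,
      Complex.sub_re, Complex.sub_im, Complex.ofReal_re, Complex.ofReal_im]
    nlinarith
  nlinarith [norm_nonneg w, norm_nonneg ((t:ℂ) - w), h1]
section
variable (S : Polynomial ℂ)

lemma key_factor (hS : S ≠ 0) (z : ℂ) (h : ∀ a ∈ S.roots, z ≠ a) :
    z * Polynomial.eval z (Polynomial.derivative S) =
      Polynomial.eval z S * (z * ((S.roots.map (fun a => (z - a)⁻¹)).sum)) := by
  have hsp : Splits S := IsAlgClosed.splits S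
  have hfac := hsp.eq_prod_roots
  have h1 : Polynomial.eval z (Polynomial.derivative S) =
      S.leadingCoeff * Polynomial.eval z (Multiset.map (fun a => X - C a) S.roots).prod *
        ((S.roots.map (fun a => (z - a)⁻¹)).sum) := by
    conv_lhs => rw [hfac]
    rw [Polynomial.derivative_C_mul, Polynomial.eval_mul, Polynomial.eval_C,
      logderiv_prod z S.roots h]
    ring
  have h2 : Polynomial.eval z S =
      S.leadingCoeff * Polynomial.eval z (Multiset.map (fun a => X - C a) S.roots).prod := by
    conv_lhs => rw [hfac]
    rw [Polynomial.eval_mul, Polynomial.eval_C]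
  rw [h1, h2]
  ring

lemma W_re_le (z : ℂ) (hz : ‖z‖ = 1) (m : Multiset ℂ)
    (ha : ∀ a ∈ m, 1 ≤ ‖a‖) (hne : ∀ a ∈ m, z ≠ a) :
    (z * ((m.map (fun a => (z - a)⁻¹)).sum)).re ≤ (Multiset.card m : ℝ) / 2 := by
  rw [← Multiset.sum_map_mul_left, re_msum, Multiset.map_map]
  have : ((m.map (Complex.re ∘ fun a => z * (z - a)⁻¹))).sum ≤ ((m.map fun _ => (1/2 : ℝ))).sum := by
    apply Multiset.sum_map_le_sum_map
    intro a ham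
    exact re_term_le hz (ha a ham) (hne a ham)
  calc _ ≤ ((m.map fun _ => (1/2 : ℝ))).sum := this
    _ = (Multiset.card m : ℝ) / 2 := by
          simp [Multiset.map_const', Multiset.sum_replicate, nsmul_eq_mul]
          ring

lemma W_re_ge (z : ℂ) (hz : ‖z‖ = 1) (m : Multiset ℂ)
    (ha : ∀ a ∈ m, ‖a‖ ≤ 1) (hne : ∀ a ∈ m, z ≠ a) :
    (Multiset.card m : ℝ) / 2 ≤ (z * ((m.map (fun a => (z - a)⁻¹)).sum)).re := by
  rw [← Multiset.sum_map_mul_left, re_msum, Multiset.map_map]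
  have : ((m.map fun _ => (1/2 : ℝ))).sum ≤ ((m.map (Complex.re ∘ fun a => z * (z - a)⁻¹))).sum := by
    apply Multiset.sum_map_le_sum_map
    intro a ham
    exact re_term_ge hz (ha a ham) (hne a ham)
  calc (Multiset.card m : ℝ) / 2 = ((m.map fun _ => (1/2 : ℝ))).sum := by
          simp [Multiset.map_const', Multiset.sum_replicate, nsmul_eq_mul]; ring
    _ ≤ _ := this

/-- if all roots have modulus ≥ 1 : |zS'(z)| ≤ |n S(z) - z S'(z)| on the circle -/
lemma outer_ineq (hS : S ≠ 0) (z : ℂ) (hz : ‖z‖ = 1)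
    (ha : ∀ a ∈ S.roots, 1 ≤ ‖a‖) (hSz : Polynomial.eval z S ≠ 0) :
    ‖Polynomial.eval z (Polynomial.derivative S)‖ ≤
      ‖(S.natDegree : ℂ) * Polynomial.eval z S
        - z * Polynomial.eval z (Polynomial.derivative S)‖ := by
  have hne : ∀ a ∈ S.roots, z ≠ a := by
    intro a haa he
    exact hSz (by rw [he]; exact (Polynomial.isRoot_of_mem_roots haa))
  have hf := key_factor S hS z hne
  set W := z * ((S.roots.map (fun a => (z - a)⁻¹)).sum) with hW
  have hcard : Multiset.card S.roots = S.natDegree :=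
    (Polynomial.splits_iff_card_roots).1 (IsAlgClosed.splits S)
  have hcard' : (Multiset.card S.roots : ℝ) = (S.natDegree : ℝ) := by exact_mod_cast hcard
  have hre : W.re ≤ (S.natDegree : ℝ) / 2 := by
    rw [← hcard']; exact W_re_le z hz S.roots ha hne
  have habs : ‖W‖ ≤ ‖((S.natDegree : ℝ) : ℂ) - W‖ :=
    abs_le_abs_sub (by positivity) hre
  calc ‖Polynomial.eval z (Polynomial.derivative S)‖
      = ‖z * Polynomial.eval z (Polynomial.derivative S)‖ := by
        rw [norm_mul, hz, one_mul]
    _ = ‖Polynomial.eval z S‖ * ‖W‖ := by rw [hf]; exact norm_mul _ _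
    _ ≤ ‖Polynomial.eval z S‖ * ‖((S.natDegree : ℝ) : ℂ) - W‖ := by
        exact mul_le_mul_of_nonneg_left habs (norm_nonneg _)
    _ = _ := by
        rw [← norm_mul]
        congr 1
        rw [mul_sub, ← hf]
        push_cast
        ring

/-- if all roots have modulus < 1 : |n S(z) - z S'(z)| ≤ |z S'(z)| on the circle -/
lemma inner_ineq (hS : S ≠ 0) (z : ℂ) (hz : ‖z‖ = 1)
    (ha : ∀ a ∈ S.roots, ‖a‖ < 1) :
    ‖(S.natDegree : ℂ) * Polynomial.eval z S
        - z * Polynomial.eval z (Polynomial.derivative S)‖ ≤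
      ‖Polynomial.eval z (Polynomial.derivative S)‖ := by
  have hne : ∀ a ∈ S.roots, z ≠ a := by
    intro a haa he
    have := ha a haa
    rw [← he, hz] at this
    exact lt_irrefl _ this
  have hf := key_factor S hS z hne
  set W := z * ((S.roots.map (fun a => (z - a)⁻¹)).sum) with hW
  have hcard : Multiset.card S.roots = S.natDegree :=
    (Polynomial.splits_iff_card_roots).1 (IsAlgClosed.splits S)
  have hcard' : (Multiset.card S.roots : ℝ) = (S.natDegree : ℝ) := by exact_mod_cast hcard
  have hre : (S.natDegree : ℝ) / 2 ≤ W.re := by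
    rw [← hcard']; exact W_re_ge z hz S.roots (fun a haa => le_of_lt (ha a haa)) hne
  have habs : ‖((S.natDegree : ℝ) : ℂ) - W‖ ≤ ‖W‖ :=
    abs_sub_le_abs (by positivity) hre
  calc ‖(S.natDegree : ℂ) * Polynomial.eval z S
        - z * Polynomial.eval z (Polynomial.derivative S)‖
      = ‖Polynomial.eval z S‖ * ‖((S.natDegree : ℝ) : ℂ) - W‖ := by
        rw [← norm_mul]
        congr 1
        rw [mul_sub, ← hf]
        push_cast
        ring
    _ ≤ ‖Polynomial.eval z S‖ * ‖W‖ := by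
        exact mul_le_mul_of_nonneg_left habs (norm_nonneg _)
    _ = ‖z * Polynomial.eval z (Polynomial.derivative S)‖ := by
        rw [hf]; exact (norm_mul _ _).symm
    _ = _ := by rw [norm_mul, hz, one_mul]
end
lemma maxMod_ge (P : Polynomial ℂ) {w : ℂ} (hw : ‖w‖ = 1) :
    ‖P.eval w‖ ≤ maxMod P := by
  apply le_csSup
  · rw [circle_eq_sphere]
    exact ((isCompact_sphere (0:ℂ) 1).image (by
      have : Continuous fun w : ℂ => ‖P.eval w‖ := by
        continuity
      exact this)).bddAbove
  · exact ⟨w, hw, rfl⟩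

section
variable (P : Polynomial ℂ) (n : ℕ)

/-- the reversed conjugate polynomial, as a function -/
noncomputable def gfun : ℂ → ℂ :=
  fun w => ∑ k ∈ Finset.range (n+1), (starRingEnd ℂ) (P.coeff (n - k)) * w ^ k

lemma gfun_diff : Differentiable ℂ (gfun P n) := by
  apply Differentiable.fun_sum
  intro k _
  exact (differentiable_const _).mul (differentiable_pow k)

lemma gfun_id (hdeg : P.natDegree = n) {z : ℂ} (hz : z ≠ 0) :
    z ^ n * (starRingEnd ℂ) (gfun P n ((starRingEnd ℂ) z)⁻¹) = P.eval z := by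
  rw [gfun, map_sum, Finset.mul_sum]
  have : ∀ k ∈ Finset.range (n+1),
      z ^ n * (starRingEnd ℂ) ((starRingEnd ℂ) (P.coeff (n - k)) * (((starRingEnd ℂ) z)⁻¹) ^ k)
        = P.coeff (n - k) * z ^ (n - k) := by
    intro k hk
    rw [map_mul, Complex.conj_conj, map_pow, map_inv₀, Complex.conj_conj]
    rw [Finset.mem_range] at hk
    have hkn : k ≤ n := Nat.lt_succ_iff.mp hk
    rw [inv_pow, pow_sub₀ z hz hkn]
    ring
  rw [Finset.sum_congr rfl this]
  have hre := Finset.sum_range_reflect (fun j => P.coeff j * z ^ j) (n+1)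
  simp only [Nat.add_sub_cancel] at hre
  rw [hre, Polynomial.eval_eq_sum_range, hdeg]
end
section
variable (P : Polynomial ℂ) (n : ℕ)

lemma gfun_circle (hdeg : P.natDegree = n) {w : ℂ} (hw : ‖w‖ = 1) :
    ‖gfun P n w‖ = ‖P.eval w‖ := by
  have hw0 : w ≠ 0 := by
    intro h; rw [h] at hw; simp at hw
  have hcw : ((starRingEnd ℂ) w)⁻¹ = w := by
    rw [← Complex.inv_eq_conj hw, inv_inv]
  have := gfun_id P n hdeg hw0
  rw [hcw] at this
  have h2 := congrArg norm this
  rw [norm_mul, norm_pow, hw, Complex.norm_conj, one_pow, one_mul] at h2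
  exact h2

lemma gfun_le (hdeg : P.natDegree = n) {w : ℂ} (hw : ‖w‖ ≤ 1) :
    ‖gfun P n w‖ ≤ maxMod P := by
  have h : ‖gfun P n w‖ ≤ maxMod P := by
    apply Complex.norm_le_of_forall_mem_frontier_norm_le (Metric.isBounded_ball (x := (0:ℂ)) (r := 1))
      ((gfun_diff P n).diffContOnCl)
    · intro z hzf
      rw [frontier_ball (0:ℂ) one_ne_zero] at hzf
      have hz1 : ‖z‖ = 1 := by
        simpa using mem_sphere_zero_iff_norm.mp hzf
      rw [gfun_circle P n hdeg hz1]
      exact maxMod_ge P hz1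
    · rw [closure_ball (0:ℂ) one_ne_zero]
      apply mem_closedBall_zero_iff.mpr
      exact hw
  simpa using h

lemma growth (hdeg : P.natDegree = n) {z : ℂ} (hz1 : 1 ≤ ‖z‖) :
    ‖P.eval z‖ ≤ maxMod P * (‖z‖)^n := by
  have hz0 : z ≠ 0 := by
    intro h; rw [h] at hz1; simp at hz1; linarith
  have hid := gfun_id P n hdeg hz0
  have h2 := congrArg norm hid
  rw [norm_mul, norm_pow, Complex.norm_conj] at h2
  have hw : ‖((starRingEnd ℂ) z)⁻¹‖ ≤ 1 := by
    rw [norm_inv, Complex.norm_conj]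
    exact inv_le_one_of_one_le₀ hz1
  calc ‖P.eval z‖ = ‖z‖ ^ n * ‖gfun P n (((starRingEnd ℂ) z)⁻¹)‖ := h2.symm
    _ ≤ ‖z‖ ^ n * maxMod P := by
        exact mul_le_mul_of_nonneg_left (gfun_le P n hdeg hw) (by positivity)
    _ = maxMod P * (‖z‖)^n := by ring

lemma lead_le (hdeg : P.natDegree = n) : ‖P.coeff n‖ ≤ maxMod P := by
  have h0 : gfun P n 0 = (starRingEnd ℂ) (P.coeff n) := by
    rw [gfun, Finset.sum_eq_single 0]
    · simp
    · intro k _ hk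
      simp [zero_pow hk]
    · intro h; simp at h
  have := gfun_le P n hdeg (by simp : ‖(0:ℂ)‖ ≤ 1)
  rwa [h0, Complex.norm_conj] at this
end
/-- Erdős–Lax theorem: if `P` has degree `n ≥ 1` and no zeros in `|z| < 1`, then
`max_{|z|=1} |P'(z)| ≤ (n/2) · max_{|z|=1} |P(z)|`. -/
theorem erdos_lax (P : Polynomial ℂ) (n : ℕ) (hn : 1 ≤ n)
    (hdeg : P.natDegree = n)
    (hz : ∀ z : ℂ, ‖z‖ < 1 → P.eval z ≠ 0) :
    ∀ z : ℂ, ‖z‖ = 1 →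
      ‖(Polynomial.derivative P).eval z‖ ≤ (n / 2 : ℝ) * maxMod P := by
  intro z hz1
  have hP0 : P ≠ 0 := by
    intro h
    rw [h, Polynomial.natDegree_zero] at hdeg
    omega
  set M := maxMod P with hM
  set d := Polynomial.eval z (Polynomial.derivative P) with hd
  set A := ‖d‖ with hA
  have hMpos : 0 < M := by
    have h1 : P.coeff n ≠ 0 := by
      rw [← hdeg]
      exact Polynomial.leadingCoeff_ne_zero.mpr hP0
    have h2 := lead_le P n hdeg
    have h3 : 0 < ‖P.coeff n‖ := norm_pos_iff.mpr h1
    linarith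
  -- Step 6: A ≤ |n P(z) - z d|
  have hroots_out : ∀ a ∈ P.roots, 1 ≤ ‖a‖ := by
    intro a ha
    by_contra hlt
    push_neg at hlt
    exact hz a hlt (Polynomial.isRoot_of_mem_roots ha)
  have hstep6 : A ≤ ‖(n:ℂ) * P.eval z - z * d‖ := by
    by_cases hPz : P.eval z = 0
    · rw [hPz, mul_zero, zero_sub, norm_neg, norm_mul, hz1, one_mul]
    · have := outer_ineq P hP0 z hz1 hroots_out hPz
      rwa [hdeg] at this
  by_cases hA0 : A = 0
  · rw [hA0]
    positivity
  have hApos : 0 < A := lt_of_le_of_ne (norm_nonneg d) (Ne.symm hA0)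
  have hd0 : d ≠ 0 := by
    intro h; rw [hA, h] at hA0; simp at hA0
  have hz0 : z ≠ 0 := by
    intro h; rw [h] at hz1; simp at hz1
  -- main claim for each r > 1
  have hclaim : ∀ r : ℝ, 1 < r → 2 * A ≤ r * (n * M) := by
    intro r hr
    have hrpos : (0:ℝ) < r := by linarith
    set u : ℂ := (r : ℂ) * d / ((A : ℂ) * z^(n-1)) with hu
    have hzn1 : z^(n-1) ≠ 0 := pow_ne_zero _ hz0
    have hAc : ((A:ℝ):ℂ) ≠ 0 := by
      simpa using hA0
    have habsu : ‖u‖ = r := by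
      rw [hu, norm_div, norm_mul, norm_mul, norm_pow, hz1, one_pow, mul_one,
        Complex.norm_real, Complex.norm_real, Real.norm_eq_abs, Real.norm_eq_abs, abs_of_pos hApos, abs_of_pos hrpos, ← hA]
      field_simp
    set T : Polynomial ℂ := P - Polynomial.C (u * (M:ℂ)) * Polynomial.X^n with hT
    have hTco : T.coeff n = P.coeff n - u * M := by
      rw [hT, Polynomial.coeff_sub, Polynomial.coeff_C_mul, Polynomial.coeff_X_pow, if_pos rfl,
        mul_one]
    have hTcon : T.coeff n ≠ 0 := by
      rw [hTco, sub_ne_zero]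
      intro he
      have h1 : ‖P.coeff n‖ = r * M := by
        rw [he, norm_mul, habsu, Complex.norm_real, Real.norm_eq_abs, abs_of_pos hMpos]
      have h2 := lead_le P n hdeg
      rw [h1] at h2
      nlinarith
    have hTdeg : T.natDegree = n := by
      apply Polynomial.natDegree_eq_of_le_of_coeff_ne_zero _ hTcon
      rw [hT]
      refine le_trans (Polynomial.natDegree_sub_le _ _) ?_
      rw [hdeg]
      apply max_le le_rfl
      refine le_trans (Polynomial.natDegree_C_mul_le _ _) ?_
      rw [Polynomial.natDegree_X_pow]
    have hT0 : T ≠ 0 := fun h => hTcon (by rw [h]; simp)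
    -- all roots of T are in the open disk
    have hTroots : ∀ a ∈ T.roots, ‖a‖ < 1 := by
      intro a ha
      by_contra hge
      push_neg at hge
      have hroot : T.eval a = 0 := Polynomial.isRoot_of_mem_roots ha
      rw [hT, Polynomial.eval_sub, Polynomial.eval_mul, Polynomial.eval_C,
        Polynomial.eval_pow, Polynomial.eval_X, sub_eq_zero] at hroot
      have h1 : ‖P.eval a‖ = r * M * (‖a‖)^n := by
        rw [hroot, norm_mul, norm_mul, habsu, norm_pow, Complex.norm_real, Real.norm_eq_abs, abs_of_pos hMpos]
      have h2 := growth P n hdeg hge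
      rw [h1, ← hM] at h2
      have h3 : (1:ℝ) ≤ (‖a‖)^n := one_le_pow₀ hge
      have h4 : (0:ℝ) < (‖a‖)^n := by positivity
      nlinarith [mul_pos hMpos h4]
    -- apply inner inequality to T
    have hinner := inner_ineq T hT0 z hz1 hTroots
    rw [hTdeg] at hinner
    -- compute eval z (derivative T)
    have hder : Polynomial.eval z (Polynomial.derivative T) = d - u * M * n * z^(n-1) := by
      rw [hT, Polynomial.derivative_sub, Polynomial.derivative_C_mul, Polynomial.derivative_X_pow,
        Polynomial.eval_sub, Polynomial.eval_mul, Polynomial.eval_C, Polynomial.eval_mul,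
        Polynomial.eval_C, Polynomial.eval_pow, Polynomial.eval_X, ← hd]
      ring
    have huz : u * z^(n-1) = (r:ℂ) * d / (A:ℂ) := by
      rw [hu]
      field_simp
    have hder2 : Polynomial.eval z (Polynomial.derivative T) = d * (1 - ((r * n * M / A : ℝ) : ℂ)) := by
      rw [hder]
      have : u * (M:ℂ) * (n:ℂ) * z^(n-1) = (r:ℂ) * d / (A:ℂ) * M * n := by
        rw [mul_comm u (M:ℂ), mul_assoc, mul_assoc, mul_comm ((n:ℂ)) _, ← mul_assoc, ← mul_assoc,
          mul_assoc _ u _, huz]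
        ring
      rw [this]
      push_cast
      field_simp
    have habsder : ‖Polynomial.eval z (Polynomial.derivative T)‖ = |A - r * n * M| := by
      rw [hder2, norm_mul, ← hA]
      have : (1 : ℂ) - ((r * n * M / A : ℝ) : ℂ) = (((1 - r * n * M / A : ℝ)) : ℂ) := by push_cast; ring
      rw [this, Complex.norm_real, Real.norm_eq_abs]
      rw [show A - r * n * M = A * (1 - r * n * M / A) by field_simp]
      rw [abs_mul, abs_of_pos hApos]
    -- compute n T(z) - z T'(z) = n P(z) - z d
    have hnum : (n:ℂ) * T.eval z - z * Polynomial.eval z (Polynomial.derivative T)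
        = (n:ℂ) * P.eval z - z * d := by
      rw [hder, hT, Polynomial.eval_sub, Polynomial.eval_mul, Polynomial.eval_C,
        Polynomial.eval_pow, Polynomial.eval_X]
      have hzn : z^n = z^(n-1) * z := by
        rw [← pow_succ]
        congr 1
        omega
      rw [hzn]
      ring
    rw [hnum, habsder] at hinner
    have hchain : A ≤ |A - r * n * M| := le_trans hstep6 hinner
    have hnpos : (0:ℝ) < (n:ℝ) := by
      have : (1:ℝ) ≤ (n:ℝ) := by exact_mod_cast hn
      linarith
    rcases abs_cases (A - r * n * M) with ⟨heq, hge⟩ | ⟨heq, hlt⟩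
    · rw [heq] at hchain
      nlinarith [mul_pos (mul_pos hrpos hnpos) hMpos]
    · rw [heq] at hchain
      nlinarith
  -- conclude
  have h2A : 2 * A ≤ n * M := by
    by_contra hcon
    push_neg at hcon
    have hnM : 0 < (n:ℝ) * M := by
      have : (1:ℝ) ≤ (n:ℝ) := by exact_mod_cast hn
      nlinarith
    set r : ℝ := (1 + (2 * A) / (n * M)) / 2 with hr
    have hr1 : 1 < r := by
      rw [hr]
      have : 1 < (2 * A) / (n * M) := (one_lt_div hnM).mpr hcon
      linarith
    have := hclaim r hr1
    rw [hr] at this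
    have hexp : (1 + (2 * A) / (n * M)) / 2 * (n * M) = (n * M + 2 * A) / 2 := by
      field_simp
    rw [hexp] at this
    nlinarith
  linarith
end

section
/- If P(z) is a polynomial of degree n all of whose zeros lie in the closed disk |z| ≤ k where k ≤ 1, then for every R > 1 and every z with |z| = 1, |P(Rz)| ≥ ((R+k)/(1+k))^n · |P(z)|. -/
-- key per-root inequality
lemma aziz_key (k R : ℝ) (hk0 : 0 < k) (hk1 : k ≤ 1) (hR : 1 < R)
    (z r : ℂ) (hz : ‖z‖ = 1) (hr : ‖r‖ ≤ k) :
    (R + k) / (1 + k) * ‖z - r‖ ≤ ‖(R : ℂ) * z - r‖ := by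
  have hq : 0 ≤ (R + k) / (1 + k) := by positivity
  apply le_of_pow_le_pow_left₀ (n := 2) two_ne_zero (norm_nonneg _)
  rw [mul_pow]
  rw [Complex.sq_norm, Complex.sq_norm]
  rw [Complex.normSq_sub, Complex.normSq_sub]
  have h1 : Complex.normSq z = 1 := by
    have := Complex.sq_norm z; rw [hz] at this; simpa using this.symm
  have h2 : Complex.normSq ((R:ℂ)*z) = R^2 := by
    rw [Complex.normSq_mul, h1, mul_one]
    simp [Complex.normSq_apply]; ring
  set t := (z * (starRingEnd ℂ) r).re with ht
  have h3 : ((R:ℂ)*z * (starRingEnd ℂ) r).re = R * t := by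
    rw [mul_assoc]
    simp [Complex.mul_re, ht]
  set ρ := ‖r‖ with hρ
  have h4 : Complex.normSq r = ρ^2 := by rw [hρ, ← Complex.sq_norm]
  have h5 : |t| ≤ ρ := by
    calc |t| ≤ ‖z * (starRingEnd ℂ) r‖ := Complex.abs_re_le_norm _
      _ = ρ := by rw [norm_mul, hz, one_mul, Complex.norm_conj]
  have h5a : -ρ ≤ t := neg_le_of_abs_le h5
  have hρ0 : 0 ≤ ρ := norm_nonneg r
  rw [h1, h2, h3, h4]
  rw [div_pow, div_mul_eq_mul_div, div_le_iff₀ (by positivity)]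
  nlinarith [mul_nonneg (mul_nonneg (sub_nonneg.2 hR.le) (sub_nonneg.2 hr)) (sub_nonneg.2 h5a),
    mul_nonneg (mul_nonneg (sub_nonneg.2 hR.le) (by nlinarith : (0:ℝ) ≤ R - k^2)) (sub_nonneg.2 h5a),
    mul_nonneg (mul_nonneg (sub_nonneg.2 hR.le) (sub_nonneg.2 hr))
      (by positivity : (0:ℝ) ≤ (1+k)*(R+ρ)+(R+k)*(1+ρ))]

lemma aziz_prod (s : Multiset ℂ) (f g : ℂ → ℝ) (hf : ∀ r ∈ s, 0 ≤ f r)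
    (h : ∀ r ∈ s, f r ≤ g r) : (s.map f).prod ≤ (s.map g).prod := by
  induction s using Multiset.induction with
  | empty => simp
  | cons a s ih =>
    simp only [Multiset.map_cons, Multiset.prod_cons]
    have h1 : 0 ≤ (s.map f).prod := Multiset.prod_nonneg (by
      intro x hx; obtain ⟨r, hr, rfl⟩ := Multiset.mem_map.mp hx
      exact hf r (Multiset.mem_cons_of_mem hr))
    have h2 : (s.map f).prod ≤ (s.map g).prod :=
      ih (fun r hr => hf r (Multiset.mem_cons_of_mem hr))
        (fun r hr => h r (Multiset.mem_cons_of_mem hr))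
    have ha : 0 ≤ f a := hf a (Multiset.mem_cons_self a s)
    have hb : f a ≤ g a := h a (Multiset.mem_cons_self a s)
    exact mul_le_mul hb h2 h1 (ha.trans hb)

/-- If all zeros of `P` (degree `n`) lie in `|z| ≤ k`, `0 < k ≤ 1`, then for `R > 1`
and `|z| = 1`, `|P(Rz)| ≥ ((R+k)/(1+k))^n · |P(z)|`. -/
theorem aziz_lemma (P : Polynomial ℂ) (n : ℕ) (hdeg : P.natDegree = n)
    (k : ℝ) (hk0 : 0 < k) (hk1 : k ≤ 1)
    (hz : ∀ w : ℂ, P.eval w = 0 → ‖w‖ ≤ k)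
    (R : ℝ) (hR : 1 < R) :
    ∀ z : ℂ, ‖z‖ = 1 →
      ((R + k) / (1 + k)) ^ n * ‖P.eval z‖
        ≤ ‖P.eval ((R : ℂ) * z)‖ := by
  intro z hz1
  by_cases hP : P = 0
  · simp [hP]
  have hsplit : P.Splits := IsAlgClosed.splits P
  have hfact := hsplit.eq_prod_roots
  have hcard : P.roots.card = n := by
    rw [← hdeg]; exact (Polynomial.splits_iff_card_roots).mp hsplit
  have heval : ∀ w : ℂ, ‖P.eval w‖
      = ‖P.leadingCoeff‖ * (P.roots.map fun r => ‖w - r‖).prod := by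
    intro w
    conv_lhs => rw [hfact]
    rw [Polynomial.eval_mul, Polynomial.eval_C, norm_mul, Polynomial.eval_multiset_prod]
    congr 1
    rw [Multiset.map_map, show ∀ s : Multiset ℂ, ‖s.prod‖ = (s.map (‖·‖)).prod from fun s => map_multiset_prod (normHom (α := ℂ)) s, Multiset.map_map]
    congr 1
    ext r
    simp
  rw [heval z, heval ((R:ℂ)*z)]
  set q := (R + k) / (1 + k) with hqdef
  have hq : 0 ≤ q := by positivity
  rw [← mul_assoc, mul_comm (q^n), mul_assoc]
  apply mul_le_mul_of_nonneg_left _ (norm_nonneg _)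
  have hroot : ∀ r ∈ P.roots, ‖r‖ ≤ k := by
    intro r hr
    exact hz r ((Polynomial.mem_roots hP).mp hr)
  calc q ^ n * (P.roots.map fun r => ‖z - r‖).prod
      = (P.roots.map fun r => q * ‖z - r‖).prod := by
        rw [← hcard, Multiset.prod_map_mul (f := fun _ => q)
          (g := fun r => ‖z - r‖)]
        simp [Multiset.map_const', Multiset.prod_replicate]
    _ ≤ (P.roots.map fun r => ‖(R:ℂ)*z - r‖).prod := by
        apply aziz_prod
        · intro r _; positivity
        · intro r hr; exact aziz_key k R hk0 hk1 hR z r hz1 (hroot r hr)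
end

section
/- If P(z) is a polynomial of degree n all of whose zeros lie in the open unit disk |z| < 1, then for every R > 1 and every z with |z| = 1, |P(Rz)| > ((R+1)/2)^n · |P(z)|. -/
lemma key_root (R : ℝ) (hR : 1 < R) (z a : ℂ) (hz : ‖z‖ = 1)
    (ha : ‖a‖ < 1) :
    (R + 1) / 2 * ‖z - a‖ < ‖(R : ℂ) * z - a‖ := by
  have h0 : 0 < ‖z - a‖ := by
    rw [norm_pos_iff]
    intro h
    rw [sub_eq_zero] at h
    rw [h] at hz
    linarith
  have habs : |(z * (starRingEnd ℂ) a).re| ≤ ‖a‖ := by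
    calc |(z * (starRingEnd ℂ) a).re| ≤ ‖z * (starRingEnd ℂ) a‖ :=
          Complex.abs_re_le_norm _
      _ = ‖a‖ := by rw [norm_mul, Complex.norm_conj, hz, one_mul]
  have hs1 : (z * (starRingEnd ℂ) a).re ≤ ‖a‖ := (abs_le.mp habs).2
  have hs2 : -(‖a‖) ≤ (z * (starRingEnd ℂ) a).re := (abs_le.mp habs).1
  have ha0 : 0 ≤ ‖a‖ := norm_nonneg _
  refine lt_of_pow_lt_pow_left₀ 2 (norm_nonneg _) ?_
  rw [mul_pow, Complex.sq_norm, Complex.sq_norm]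
  have e1 : Complex.normSq ((R : ℂ) * z - a) =
      R ^ 2 + Complex.normSq a - 2 * (R * (z * (starRingEnd ℂ) a).re) := by
    rw [Complex.normSq_sub]
    have : Complex.normSq ((R : ℂ) * z) = R ^ 2 := by
      rw [Complex.normSq_mul, Complex.normSq_ofReal, ← Complex.sq_norm, hz]
      ring
    rw [this]
    have : ((R : ℂ) * z * (starRingEnd ℂ) a).re = R * (z * (starRingEnd ℂ) a).re := by
      rw [mul_assoc, Complex.re_ofReal_mul]
    rw [this]
  have e2 : Complex.normSq (z - a) =
      1 + Complex.normSq a - 2 * (z * (starRingEnd ℂ) a).re := by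
    rw [Complex.normSq_sub]
    have : Complex.normSq z = 1 := by rw [← Complex.sq_norm, hz]; norm_num
    rw [this]
  have e3 : Complex.normSq a = ‖a‖ ^ 2 := (Complex.sq_norm a).symm
  rw [e1, e2, e3]
  set s := (z * (starRingEnd ℂ) a).re
  set t := ‖a‖
  have hst : (0:ℝ) ≤ s + t := by linarith
  nlinarith [mul_nonneg hst (sq_nonneg (R - 1)),
    mul_pos (sub_pos.mpr ha) (sub_pos.mpr hR),
    mul_nonneg (mul_nonneg (sub_nonneg.mpr ha.le) (sub_nonneg.mpr hR.le)) ha0,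
    mul_pos (sub_pos.mpr ha) (by nlinarith : (0:ℝ) < (R+3)*t + 3*R + 1)]

lemma aux_prod (k : ℝ) (f g : ℂ → ℝ) :
    ∀ (s : Multiset ℂ), s ≠ 0 → (∀ r ∈ s, 0 < g r ∧ k * g r < f r) → 0 < k →
    k ^ Multiset.card s * (s.map g).prod < (s.map f).prod := by
  intro s
  induction s using Multiset.induction_on with
  | empty => intro h; exact absurd rfl h
  | cons a s ih =>
    intro _ h hk
    have ha := h a (Multiset.mem_cons_self a s)
    have hgpos : 0 < (s.map g).prod := by
      apply Multiset.prod_pos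
      intro x hx
      obtain ⟨y, hy, rfl⟩ := Multiset.mem_map.mp hx
      exact (h y (Multiset.mem_cons_of_mem hy)).1
    simp only [Multiset.map_cons, Multiset.prod_cons, Multiset.card_cons]
    rcases eq_or_ne s 0 with rfl | hs
    · simp only [Multiset.card_zero, Multiset.map_zero, Multiset.prod_zero, mul_one]
      rw [pow_one]
      exact ha.2
    · have ih' := ih hs (fun r hr => h r (Multiset.mem_cons_of_mem hr)) hk
      have h1 : k ^ (Multiset.card s + 1) * (g a * (s.map g).prod)
          = (k * g a) * (k ^ Multiset.card s * (s.map g).prod) := by ring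
      rw [h1]
      exact mul_lt_mul'' ha.2 ih' (mul_nonneg hk.le ha.1.le)
        (mul_nonneg (pow_nonneg hk.le _) hgpos.le)

/-- If all zeros of `P` (degree `n ≥ 1`) lie in `|z| < 1`, then for `R > 1` and
`|z| = 1`, `|P(Rz)| > ((R+1)/2)^n · |P(z)|`. -/
theorem growth_from_inside_zeros (P : Polynomial ℂ) (n : ℕ) (hn : 1 ≤ n)
    (hdeg : P.natDegree = n)
    (hz : ∀ w : ℂ, P.eval w = 0 → ‖w‖ < 1)
    (R : ℝ) (hR : 1 < R) :
    ∀ z : ℂ, ‖z‖ = 1 →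
      ((R + 1) / 2) ^ n * ‖P.eval z‖
        < ‖P.eval ((R : ℂ) * z)‖ := by
  intro z hz1
  have hP0 : P ≠ 0 := by
    intro h
    rw [h, Polynomial.natDegree_zero] at hdeg
    omega
  have hsplits : P.Splits := IsAlgClosed.splits P
  have hcard : Multiset.card P.roots = n := by
    rw [← hdeg, hsplits.natDegree_eq_card_roots]
  have hfact := hsplits.eq_prod_roots
  have heval : ∀ w : ℂ, ‖P.eval w‖
      = ‖P.leadingCoeff‖ * ((P.roots.map fun a => ‖w - a‖).prod) := by
    intro w
    conv_lhs => rw [hfact]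
    rw [Polynomial.eval_mul, Polynomial.eval_C, norm_mul, Polynomial.eval_multiset_prod]
    congr 1
    rw [Multiset.map_map]
    rw [show ‖_‖ = _ from map_multiset_prod (normHom : ℂ →*₀ ℝ) _]
    rw [Multiset.map_map]
    congr 1
    ext a
    simp
  have hlc : 0 < ‖P.leadingCoeff‖ := by
    rw [norm_pos_iff]
    exact Polynomial.leadingCoeff_ne_zero.mpr hP0
  have hroots : ∀ r ∈ P.roots, ‖r‖ < 1 := by
    intro r hr
    exact hz r ((Polynomial.mem_roots hP0).mp hr)
  have hne : P.roots ≠ 0 := by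
    intro h
    rw [h] at hcard
    simp at hcard
    omega
  have hprod := aux_prod ((R + 1) / 2) (fun a => ‖(R : ℂ) * z - a‖)
      (fun a => ‖z - a‖) P.roots hne
      (fun r hr => ⟨by
        rw [norm_pos_iff]
        intro h
        rw [sub_eq_zero] at h
        rw [h] at hz1
        exact absurd hz1 (ne_of_lt (hroots r hr)),
        key_root R hR z r hz1 (hroots r hr)⟩) (by linarith)
  rw [hcard] at hprod
  rw [heval z, heval ((R : ℂ) * z)]
  calc ((R + 1) / 2) ^ n * (‖P.leadingCoeff‖ * (P.roots.map fun a => ‖z - a‖).prod)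
      = ‖P.leadingCoeff‖ * (((R + 1) / 2) ^ n * (P.roots.map fun a => ‖z - a‖).prod) := by ring
    _ < ‖P.leadingCoeff‖ * (P.roots.map fun a => ‖(R : ℂ) * z - a‖).prod :=
        (mul_lt_mul_iff_right₀ hlc).mpr hprod
end

section
/- If P(z) is a polynomial of degree n and Q(z) = zⁿ·conj(P(1/conj(z))) is its conjugate reciprocal polynomial, then for every R ≥ 1 and all z with |z| ≥ 1: |R·P'(Rz) − P'(z)| + |R·Q'(Rz) − Q'(z)| ≤ n·(Rⁿ − 1)·|z|^{n−1} · max_{|w|=1} |P(w)|. -/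
open Polynomial Complex Metric

/-- The conjugate reciprocal polynomial `Q(z) = z^n * conj (P (1 / conj z))`. -/
noncomputable def recipPoly (P : Polynomial ℂ) : Polynomial ℂ :=
  (P.map (starRingEnd ℂ)).reverse

noncomputable def Complex.abs : AbsoluteValue ℂ ℝ := NormedField.toAbsoluteValue ℂ

@[simp] lemma Complex.norm_eq_abs (z : ℂ) : ‖z‖ = Complex.abs z := rfl

lemma Complex.abs_apply (z : ℂ) : Complex.abs z = Real.sqrt (Complex.normSq z) := Complex.norm_def z

@[simp] lemma Complex.abs_conj (z : ℂ) : Complex.abs (starRingEnd ℂ z) = Complex.abs z :=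
  Complex.norm_conj z

@[simp] lemma Complex.abs_ofReal (r : ℝ) : Complex.abs (r : ℂ) = |r| := Complex.norm_real r

lemma Complex.continuous_abs : Continuous Complex.abs := continuous_norm

lemma Complex.sq_abs (z : ℂ) : Complex.abs z ^ 2 = Complex.normSq z := Complex.sq_norm z

lemma Complex.abs_exp (z : ℂ) : Complex.abs (Complex.exp z) = Real.exp z.re := Complex.norm_exp z

lemma Complex.re_le_abs (z : ℂ) : z.re ≤ Complex.abs z := Complex.re_le_norm z

namespace CorOne



noncomputable def starn (n : ℕ) (f : ℂ[X]) : ℂ[X] := (f.map (starRingEnd ℂ)).reflect n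

lemma coeff_starn (n : ℕ) (f : ℂ[X]) (k : ℕ) :
    (starn n f).coeff k = starRingEnd ℂ (f.coeff (revAt n k)) := by
  simp [starn, coeff_reflect, coeff_map]

lemma starn_starn (n : ℕ) (f : ℂ[X]) : starn n (starn n f) = f := by
  ext k
  simp [coeff_starn, revAt_invol]

lemma natDegree_starn_le (n : ℕ) (f : ℂ[X]) (hf : f.natDegree ≤ n) :
    (starn n f).natDegree ≤ n := by
  refine natDegree_le_iff_coeff_eq_zero.2 fun k hk => ?_
  rw [coeff_starn, revAt_eq_self_of_lt hk, coeff_eq_zero_of_natDegree_lt (lt_of_le_of_lt hf hk)]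
  simp

lemma starn_sub (n : ℕ) (f g : ℂ[X]) : starn n (f - g) = starn n f - starn n g := by
  simp [starn, Polynomial.map_sub, reflect_sub]

lemma starn_C (n : ℕ) (c : ℂ) : starn n (C c) = C (starRingEnd ℂ c) * X ^ n := by
  simp [starn, reflect_C]

lemma eval_map_conj (f : ℂ[X]) (z : ℂ) :
    eval z (f.map (starRingEnd ℂ)) = starRingEnd ℂ (eval (starRingEnd ℂ z) f) := by
  induction f using Polynomial.induction_on' with
  | add p q hp hq => simp [hp, hq]
  | monomial k a => simp [eval_monomial]

/-- eval of reflect: `eval z (reflect n g) = z^n * eval z⁻¹ g` for `z ≠ 0`. -/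
lemma eval_reflect (n : ℕ) (g : ℂ[X]) (hg : g.natDegree ≤ n) (z : ℂ) (hz : z ≠ 0) :
    eval z (reflect n g) = z ^ n * eval z⁻¹ g := by
  have hinv : Invertible z⁻¹ := invertibleOfNonzero (inv_ne_zero hz)
  have h := eval₂_reflect_mul_pow (RingHom.id ℂ) z⁻¹ n g hg
  have hio : (⅟ (z⁻¹) : ℂ) = z := by
    rw [invOf_eq_inv, inv_inv]
  rw [hio] at h
  have h' : eval z (reflect n g) * z⁻¹ ^ n = eval z⁻¹ g := h
  rw [← h', mul_comm, mul_assoc, ← mul_pow, inv_mul_cancel₀ hz, one_pow, mul_one]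

lemma eval_starn (n : ℕ) (f : ℂ[X]) (hf : f.natDegree ≤ n) (z : ℂ) (hz : z ≠ 0) :
    eval z (starn n f) = z ^ n * starRingEnd ℂ (eval (starRingEnd ℂ z)⁻¹ f) := by
  have hmap : (f.map (starRingEnd ℂ)).natDegree ≤ n := by
    rwa [natDegree_map_eq_of_injective (RingHom.injective _)]
  rw [starn, eval_reflect n _ hmap z hz, eval_map_conj]
  simp

lemma abs_eval_starn (n : ℕ) (f : ℂ[X]) (hf : f.natDegree ≤ n) (z : ℂ) (hz : z ≠ 0) :
    Complex.abs (eval z (starn n f)) =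
      Complex.abs z ^ n * Complex.abs (eval (starRingEnd ℂ z)⁻¹ f) := by
  rw [eval_starn n f hf z hz]
  simp [map_mul, map_pow]

lemma abs_eval_starn_circle (n : ℕ) (f : ℂ[X]) (hf : f.natDegree ≤ n) (z : ℂ)
    (hz : Complex.abs z = 1) :
    Complex.abs (eval z (starn n f)) = Complex.abs (eval ((starRingEnd ℂ) z)⁻¹ f) := by
  have hz0 : z ≠ 0 := by intro h; simp [h] at hz
  rw [abs_eval_starn n f hf z hz0, hz, one_pow, one_mul]




/-- Max modulus principle for polynomials on the closed unit disk. -/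
lemma disk_bound (f : ℂ[X]) {B : ℝ} (hB : ∀ w : ℂ, Complex.abs w = 1 → Complex.abs (eval w f) ≤ B)
    {z : ℂ} (hz : Complex.abs z ≤ 1) : Complex.abs (eval z f) ≤ B := by
  have hd : DiffContOnCl ℂ (fun w => eval w f) (ball (0 : ℂ) 1) :=
    (f.differentiable.differentiableOn).diffContOnCl
  have hfr : ∀ w ∈ frontier (ball (0 : ℂ) 1), ‖eval w f‖ ≤ B := by
    intro w hw
    rw [frontier_ball (0 : ℂ) one_ne_zero] at hw
    simp only [mem_sphere_iff_norm, sub_zero] at hw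
    exact hB w (by rwa [← Complex.norm_eq_abs])
  have hcl : z ∈ closure (ball (0 : ℂ) 1) := by
    rw [closure_ball (0 : ℂ) one_ne_zero, mem_closedBall_iff_norm, sub_zero]
    rwa [Complex.norm_eq_abs]
  simpa [Complex.norm_eq_abs] using
    Complex.norm_le_of_forall_mem_frontier_norm_le isBounded_ball hd hfr hcl


lemma natDegree_reflect_le (n : ℕ) (f : ℂ[X]) (hf : f.natDegree ≤ n) :
    (reflect n f).natDegree ≤ n := by
  refine natDegree_le_iff_coeff_eq_zero.2 fun k hk => ?_
  rw [coeff_reflect, revAt_eq_self_of_lt hk]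
  exact coeff_eq_zero_of_natDegree_lt (lt_of_le_of_lt hf hk)

/-- Growth lemma: a polynomial of degree at most `m` bounded by `B` on the unit circle is
bounded by `B * |z|^m` for `|z| ≥ 1`. -/
lemma growth (f : ℂ[X]) (m : ℕ) (hm : f.natDegree ≤ m) {B : ℝ}
    (hB : ∀ w : ℂ, Complex.abs w = 1 → Complex.abs (eval w f) ≤ B)
    {z : ℂ} (hz : 1 ≤ Complex.abs z) :
    Complex.abs (eval z f) ≤ B * Complex.abs z ^ m := by
  have hz0 : z ≠ 0 := by
    intro h; rw [h] at hz; simp at hz; linarith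
  set g := reflect m f with hg
  have hgB : ∀ w : ℂ, Complex.abs w = 1 → Complex.abs (eval w g) ≤ B := by
    intro w hw
    have hw0 : w ≠ 0 := by intro h; simp [h] at hw
    rw [hg, eval_reflect m f hm w hw0, map_mul, map_pow, hw, one_pow, one_mul]
    exact hB _ (by rw [map_inv₀, hw, inv_one])
  have hzi : Complex.abs z⁻¹ ≤ 1 := by
    rw [map_inv₀]
    exact inv_le_one_of_one_le₀ hz
  have h1 : Complex.abs (eval z⁻¹ g) ≤ B := disk_bound g hgB hzi
  have h2 : eval z⁻¹ g = (z⁻¹) ^ m * eval z f := by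
    rw [hg, eval_reflect m f hm z⁻¹ (inv_ne_zero hz0), inv_inv]
  rw [h2, map_mul, map_pow, map_inv₀] at h1
  have hpow : (0:ℝ) < Complex.abs z ^ m := by positivity
  calc Complex.abs (eval z f) = (Complex.abs z ^ m)⁻¹ * Complex.abs (eval z f) * Complex.abs z ^ m := by
        field_simp
    _ ≤ B * Complex.abs z ^ m := by
        apply mul_le_mul_of_nonneg_right _ (le_of_lt hpow)
        rw [← inv_pow]
        exact h1






lemma circle_eq_sphere : {w : ℂ | Complex.abs w = 1} = sphere (0 : ℂ) 1 := by
  ext w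
  simp [mem_sphere_iff_norm, Complex.norm_eq_abs]

lemma maxMod_bound (P : ℂ[X]) (w : ℂ) (hw : Complex.abs w = 1) :
    Complex.abs (P.eval w) ≤ maxMod P := by
  have hbdd : BddAbove ((fun w => Complex.abs (P.eval w)) '' {w : ℂ | Complex.abs w = 1}) := by
    rw [circle_eq_sphere]
    have hc : Continuous fun w : ℂ => Complex.abs (P.eval w) :=
      Complex.continuous_abs.comp (Polynomial.continuous P)
    exact ((isCompact_sphere (0:ℂ) 1).image hc).bddAbove
  exact le_csSup hbdd ⟨w, hw, rfl⟩

lemma maxMod_nonneg (P : ℂ[X]) : 0 ≤ maxMod P :=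
  le_trans (Complex.abs.nonneg _) (maxMod_bound P 1 (by simp))

lemma maxMod_pos (P : ℂ[X]) (hP : P ≠ 0) : 0 < maxMod P := by
  by_contra h
  push_neg at h
  have hall : ∀ w : ℂ, Complex.abs w = 1 → P.eval w = 0 := by
    intro w hw
    have := maxMod_bound P w hw
    have : Complex.abs (P.eval w) ≤ 0 := le_trans this h
    simpa using le_antisymm this (Complex.abs.nonneg _)
  apply hP
  apply P.eq_zero_of_infinite_isRoot
  apply Set.infinite_of_injective_forall_mem (f := fun k : ℕ => Complex.exp (k * Complex.I))
  · intro a b hab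
    rw [Complex.exp_eq_exp_iff_exists_int] at hab
    obtain ⟨m, hm⟩ := hab
    have him := congrArg Complex.im hm
    simp at him
    have : (a : ℝ) = b + m * (2 * Real.pi) := by exact_mod_cast him
    rcases eq_or_ne m 0 with hm0 | hm0
    · rw [hm0] at this; simpa using this
    · exfalso
      have hpi : Irrational ((m : ℝ) * (2 * Real.pi)) := by
        have := (irrational_pi.ne_int 0)
        have h2 : Irrational (2 * Real.pi) := by
          simpa [mul_comm] using irrational_pi.natCast_mul (two_ne_zero)
        simpa [mul_comm] using h2.intCast_mul hm0
      have : ((m : ℝ)) * (2 * Real.pi) = (a : ℝ) - b := by linarith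
      rw [this] at hpi
      exact hpi ⟨(a : ℤ) - b, by push_cast; ring⟩
  · intro k
    have habs : Complex.abs (Complex.exp (k * Complex.I)) = 1 := by
      rw [Complex.abs_exp]
      simp
    exact hall _ habs





/-- per-factor estimate -/
lemma abs_sub_le_abs_smul_sub {R : ℝ} (hR : 1 ≤ R) {z r : ℂ} (hz : 1 ≤ Complex.abs z)
    (hr : Complex.abs r ≤ 1) : Complex.abs (z - r) ≤ Complex.abs ((R : ℂ) * z - r) := by
  rw [Complex.abs_apply, Complex.abs_apply]
  apply Real.sqrt_le_sqrt
  have h1 : Complex.normSq (z - r) = Complex.normSq z + Complex.normSq r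
      - 2 * (z * (starRingEnd ℂ) r).re := Complex.normSq_sub z r
  have h2 : Complex.normSq ((R:ℂ) * z - r) = R^2 * Complex.normSq z + Complex.normSq r
      - 2 * (R * (z * (starRingEnd ℂ) r).re) := by
    rw [Complex.normSq_sub, Complex.normSq_mul]
    simp [Complex.normSq_ofReal, Complex.re_ofReal_mul, mul_assoc]
    ring
  rw [h1, h2]
  have ht : (z * (starRingEnd ℂ) r).re ≤ Complex.normSq z := by
    calc (z * (starRingEnd ℂ) r).re ≤ Complex.abs (z * (starRingEnd ℂ) r) := Complex.re_le_abs _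
      _ = Complex.abs z * Complex.abs r := by rw [map_mul, Complex.abs_conj]
      _ ≤ Complex.abs z * 1 := by
          exact mul_le_mul_of_nonneg_left hr (Complex.abs.nonneg z)
      _ ≤ Complex.abs z * Complex.abs z := by
          rw [mul_one]; exact le_mul_of_one_le_left (Complex.abs.nonneg z) hz
      _ = Complex.normSq z := by rw [← Complex.sq_abs]; ring
  have hns : (0:ℝ) ≤ Complex.normSq z := Complex.normSq_nonneg z
  nlinarith [mul_nonneg (sub_nonneg.2 hR) (sub_nonneg.2 ht),
    mul_nonneg (mul_nonneg (sub_nonneg.2 hR) (sub_nonneg.2 hR)) hns]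

lemma multiset_abs_prod (s : Multiset ℂ) : Complex.abs s.prod = (s.map Complex.abs).prod := by
  induction s using Multiset.induction_on with
  | empty => simp
  | cons a t ih => simp [map_mul, ih]

lemma multiset_re_sum (s : Multiset ℂ) : s.sum.re = (s.map Complex.re).sum := by
  induction s using Multiset.induction_on with
  | empty => simp
  | cons a t ih => simp [ih]

lemma re_term_pos {z r : ℂ} (hz : 1 < Complex.abs z) (hr : Complex.abs r ≤ 1) :
    0 < (z * (z - r)⁻¹).re := by
  have hzr : z - r ≠ 0 := by
    intro h
    rw [sub_eq_zero] at h
    rw [h] at hz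
    linarith
  rw [mul_comm, inv_mul_eq_div, Complex.div_re]
  have hnum : z.re * (z-r).re + z.im * (z-r).im = Complex.normSq z - (z * (starRingEnd ℂ) r).re := by
    simp [Complex.normSq_apply, Complex.mul_re, Complex.sub_re, Complex.sub_im]
    ring
  have ht : (z * (starRingEnd ℂ) r).re < Complex.normSq z := by
    calc (z * (starRingEnd ℂ) r).re ≤ Complex.abs (z * (starRingEnd ℂ) r) := Complex.re_le_abs _
      _ = Complex.abs z * Complex.abs r := by rw [map_mul, Complex.abs_conj]
      _ ≤ Complex.abs z * 1 := mul_le_mul_of_nonneg_left hr (Complex.abs.nonneg z)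
      _ < Complex.abs z * Complex.abs z := by
          rw [mul_one]; nlinarith [Complex.abs.nonneg z]
      _ = Complex.normSq z := by rw [← Complex.sq_abs]; ring
  have hpos : 0 < Complex.normSq (z - r) := Complex.normSq_pos.2 hzr
  rw [← add_div, hnum]
  exact div_pos (by linarith) hpos



lemma log_deriv (s : Multiset ℂ) (z : ℂ) (hz : ∀ r ∈ s, z ≠ r) :
    eval z (derivative (s.map (fun a => X - C a)).prod)
      = eval z ((s.map (fun a => X - C a)).prod) * (s.map (fun r => (z - r)⁻¹)).sum := by
  induction s using Multiset.induction_on with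
  | empty => simp
  | cons a t ih =>
    have hza : z - a ≠ 0 := sub_ne_zero.2 (hz a (Multiset.mem_cons_self a t))
    have iht := ih (fun r hr => hz r (Multiset.mem_cons_of_mem hr))
    simp only [Multiset.map_cons, Multiset.prod_cons, Multiset.sum_cons, derivative_mul,
      eval_add, eval_mul, eval_sub, eval_X, eval_C, derivative_sub, derivative_X, derivative_C,
      sub_zero, eval_one, one_mul, iht]
    field_simp

lemma eval_prod_ne_zero (s : Multiset ℂ) (z : ℂ) (hz : ∀ r ∈ s, z ≠ r) :
    eval z ((s.map (fun a => X - C a)).prod) ≠ 0 := by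
  rw [eval_multiset_prod, Multiset.map_map]
  apply Multiset.prod_ne_zero
  intro h0
  rw [Multiset.mem_map] at h0
  obtain ⟨r, hr, hr0⟩ := h0
  simp only [Function.comp_apply, eval_sub, eval_X, eval_C] at hr0
  exact hz r hr (by rwa [sub_eq_zero] at hr0)

lemma sum_inv_ne_zero (s : Multiset ℂ) (hs : s ≠ 0) (z : ℂ) (hz : 1 < Complex.abs z)
    (hr : ∀ r ∈ s, Complex.abs r ≤ 1) :
    (s.map (fun r => (z - r)⁻¹)).sum ≠ 0 := by
  intro h0
  have hmul : z * (s.map (fun r => (z - r)⁻¹)).sum = (s.map (fun r => z * (z - r)⁻¹)).sum := by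
    rw [Multiset.sum_map_mul_left]
  have hre : (0:ℝ) < ((s.map (fun r => z * (z - r)⁻¹)).sum).re := by
    rw [multiset_re_sum, Multiset.map_map]
    obtain ⟨a, ha⟩ := Multiset.exists_mem_of_ne_zero hs
    rw [← Multiset.cons_erase ha, Multiset.map_cons, Multiset.sum_cons]
    have h1 : 0 < (z * (z - a)⁻¹).re := re_term_pos hz (hr a ha)
    have h2 : (0:ℝ) ≤ ((s.erase a).map ((fun x : ℂ => x.re) ∘ fun r => z * (z - r)⁻¹)).sum := by
      apply Multiset.sum_nonneg
      intro x hx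
      rw [Multiset.mem_map] at hx
      obtain ⟨r, hrm, hrx⟩ := hx
      have := re_term_pos hz (hr r (Multiset.mem_of_mem_erase hrm))
      rw [← hrx]
      exact le_of_lt this
    simpa using add_pos_of_pos_of_nonneg h1 h2
  rw [h0, mul_zero] at hmul
  rw [← hmul] at hre
  simp at hre

/-- Gauss–Lucas, disk version. -/
lemma gl_outside (g : ℂ[X]) (hg : 1 ≤ g.natDegree)
    (hroots : ∀ r ∈ g.roots, Complex.abs r ≤ 1) (z : ℂ) (hz : 1 < Complex.abs z) :
    eval z (derivative g) ≠ 0 := by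
  have hg0 : g ≠ 0 := by
    intro h; rw [h] at hg; simp at hg
  have hsplit := IsAlgClosed.splits g
  have hfac := hsplit.eq_prod_roots
  have hcard : g.roots.card = g.natDegree := (splits_iff_card_roots).1 hsplit
  have hzr : ∀ r ∈ g.roots, z ≠ r := by
    intro r hr he
    have := hroots r hr
    rw [← he] at this
    linarith
  have hne : g.roots ≠ 0 := by
    intro h
    rw [h] at hcard
    simp at hcard
    omega
  have hlead : g.leadingCoeff ≠ 0 := leadingCoeff_ne_zero.2 hg0
  rw [hfac, derivative_C_mul, eval_C_mul, log_deriv _ _ hzr]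
  exact mul_ne_zero hlead (mul_ne_zero (eval_prod_ne_zero _ _ hzr)
    (sum_inv_ne_zero _ hne _ hz hroots))

lemma prod_abs_mono (R : ℝ) (hR : 1 ≤ R) (z : ℂ) (hz : 1 ≤ Complex.abs z) (s : Multiset ℂ)
    (hr : ∀ r ∈ s, Complex.abs r ≤ 1) :
    (s.map (fun r => Complex.abs (z - r))).prod ≤
      (s.map (fun r => Complex.abs ((R:ℂ) * z - r))).prod := by
  induction s using Multiset.induction_on with
  | empty => simp
  | cons a t ih =>
    simp only [Multiset.map_cons, Multiset.prod_cons]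
    have h1 := abs_sub_le_abs_smul_sub hR hz (hr a (Multiset.mem_cons_self a t))
    have h2 := ih (fun r hrm => hr r (Multiset.mem_cons_of_mem hrm))
    apply mul_le_mul h1 h2 _ (Complex.abs.nonneg _)
    apply Multiset.prod_nonneg
    intro x hx
    rw [Multiset.mem_map] at hx
    obtain ⟨r, _, hrx⟩ := hx
    rw [← hrx]
    exact Complex.abs.nonneg _

/-- if all roots of `f ≠ 0` lie in the closed unit disk then `|f(z)| ≤ |f(Rz)|`. -/
lemma abs_eval_mono (f : ℂ[X]) (hf : f ≠ 0) (hroots : ∀ r ∈ f.roots, Complex.abs r ≤ 1)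
    (R : ℝ) (hR : 1 ≤ R) (z : ℂ) (hz : 1 ≤ Complex.abs z) :
    Complex.abs (eval z f) ≤ Complex.abs (eval ((R:ℂ) * z) f) := by
  have hsplit := IsAlgClosed.splits f
  have hfac := hsplit.eq_prod_roots
  have habs : ∀ w : ℂ, Complex.abs (eval w f)
      = Complex.abs f.leadingCoeff * (f.roots.map (fun r => Complex.abs (w - r))).prod := by
    intro w
    conv_lhs => rw [hfac]
    rw [eval_mul, eval_C, map_mul, eval_multiset_prod, Multiset.map_map, multiset_abs_prod,
      Multiset.map_map]
    congr 1
    refine congrArg Multiset.prod (Multiset.map_congr rfl ?_)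
    intro r _
    simp
  rw [habs z, habs ((R:ℂ)*z)]
  exact mul_le_mul_of_nonneg_left (prod_abs_mono R hR z hz _ hroots) (Complex.abs.nonneg _)


section Star

variable {h : ℂ[X]} {n : ℕ}

lemma conj_inv_eq_self {x : ℂ} (hx : Complex.abs x = 1) : ((starRingEnd ℂ) x)⁻¹ = x := by
  have h1 : (starRingEnd ℂ) x * x = 1 := by
    rw [mul_comm, Complex.mul_conj]
    norm_cast
    rw [← Complex.sq_abs, hx]; norm_num
  exact inv_eq_of_mul_eq_one_right h1

lemma star_le_disk (hdeg : h.natDegree ≤ n)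
    (hfree : ∀ w : ℂ, Complex.abs w ≤ 1 → eval w h ≠ 0) :
    ∀ w : ℂ, Complex.abs w ≤ 1 → Complex.abs (eval w (starn n h)) ≤ Complex.abs (eval w h) := by
  intro w hw
  have hball : ∀ x : ℂ, x ∈ closedBall (0:ℂ) 1 → eval x h ≠ 0 := by
    intro x hx
    apply hfree
    simpa [Complex.dist_eq] using hx
  have hd : DiffContOnCl ℂ (fun z => eval z (starn n h) / eval z h) (ball (0:ℂ) 1) := by
    constructor
    · apply DifferentiableOn.div
      · exact (Polynomial.differentiable _).differentiableOn
      · exact (Polynomial.differentiable _).differentiableOn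
      · intro x hx
        exact hball x (ball_subset_closedBall hx)
    · rw [closure_ball (0:ℂ) one_ne_zero]
      exact ContinuousOn.div ((Polynomial.continuous _).continuousOn)
        ((Polynomial.continuous _).continuousOn) hball
  have hfr : ∀ x ∈ frontier (ball (0:ℂ) 1),
      ‖eval x (starn n h) / eval x h‖ ≤ 1 := by
    intro x hx
    rw [frontier_ball (0:ℂ) one_ne_zero] at hx
    have hx1 : Complex.abs x = 1 := by
      simpa [Complex.dist_eq] using hx
    have he : Complex.abs (eval x (starn n h)) = Complex.abs (eval x h) := by
      rw [abs_eval_starn_circle n h hdeg x hx1, conj_inv_eq_self hx1]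
    rw [Complex.norm_eq_abs, map_div₀, he]
    have hx0 : eval x h ≠ 0 := hfree x (le_of_eq hx1)
    rw [div_self]
    simpa using hx0
  have hcl : w ∈ closure (ball (0:ℂ) 1) := by
    rw [closure_ball (0:ℂ) one_ne_zero]
    simpa [Complex.dist_eq] using hw
  have := Complex.norm_le_of_forall_mem_frontier_norm_le isBounded_ball hd hfr hcl
  rw [Complex.norm_eq_abs, map_div₀, div_le_one (Complex.abs.pos (hfree w hw))] at this
  exact this

lemma star_outside (hdeg : h.natDegree ≤ n)
    (hfree : ∀ w : ℂ, Complex.abs w ≤ 1 → eval w h ≠ 0)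
    {z : ℂ} (hz : 1 < Complex.abs z) :
    eval z (starn n h) ≠ 0 ∧ Complex.abs (eval z h) ≤ Complex.abs (eval z (starn n h)) := by
  have hz0 : z ≠ 0 := by
    intro h0; rw [h0] at hz; simp at hz; linarith
  set w : ℂ := ((starRingEnd ℂ) z)⁻¹ with hw
  have hwabs : Complex.abs w = (Complex.abs z)⁻¹ := by
    rw [hw, map_inv₀, Complex.abs_conj]
  have hwle : Complex.abs w ≤ 1 := by
    rw [hwabs]
    exact le_of_lt (inv_lt_one_of_one_lt₀ hz)
  have e1 : eval z (starn n h) = z ^ n * (starRingEnd ℂ) (eval w h) :=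
    eval_starn n h hdeg z hz0
  constructor
  · rw [e1]
    exact mul_ne_zero (pow_ne_zero n hz0) (by simpa using hfree w hwle)
  · have e2 : eval z h = z ^ n * (starRingEnd ℂ) (eval w (starn n h)) := by
      conv_lhs => rw [← starn_starn n h]
      exact eval_starn n (starn n h) (natDegree_starn_le n h hdeg) z hz0
    rw [e1, e2]
    simp only [map_mul, map_pow, Complex.abs_conj]
    exact mul_le_mul_of_nonneg_left (star_le_disk hdeg hfree w hwle) (by positivity)

lemma not_const (hdeg : h.natDegree ≤ n) (hn : 1 ≤ n)
    (hfree : ∀ w : ℂ, Complex.abs w ≤ 1 → eval w h ≠ 0)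
    {μ : ℂ} (hμ : Complex.abs μ < 1) :
    1 ≤ (starn n h - C μ * h).natDegree := by
  by_contra hcon
  push_neg at hcon
  rw [Nat.lt_one_iff] at hcon
  set d := starn n h - C μ * h with hd
  have hcoeff : ∀ k : ℕ, 1 ≤ k → d.coeff k = 0 := by
    intro k hk
    exact coeff_eq_zero_of_natDegree_lt (by omega)
  have hdk : ∀ k : ℕ, k ≤ n →
      d.coeff k = (starRingEnd ℂ) (h.coeff (n - k)) - μ * h.coeff k := by
    intro k hk
    rw [hd, coeff_sub, coeff_starn, coeff_C_mul, revAt_le hk]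
  have hne : h ≠ 0 := by
    intro h0
    exact hfree 0 (by simp) (by simp [h0])
  have hmid : ∀ k : ℕ, 1 ≤ k → k ≤ n - 1 → h.coeff k = 0 := by
    intro k hk1 hk2
    have hkn : k ≤ n := by omega
    have hnkn : n - k ≤ n := by omega
    have e1 : (starRingEnd ℂ) (h.coeff (n - k)) = μ * h.coeff k := by
      have := hcoeff k hk1
      rw [hdk k hkn] at this
      linear_combination this
    have e2 : (starRingEnd ℂ) (h.coeff k) = μ * h.coeff (n - k) := by
      have h1k : 1 ≤ n - k := by omega
      have := hcoeff (n - k) h1k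
      rw [hdk (n - k) hnkn] at this
      have hnn : n - (n - k) = k := by omega
      rw [hnn] at this
      linear_combination this
    have e3 : h.coeff k = (starRingEnd ℂ) μ * (μ * h.coeff k) := by
      conv_lhs => rw [← Complex.conj_conj (h.coeff k), e2, map_mul, e1]
    have e4 : (1 - (starRingEnd ℂ) μ * μ) * h.coeff k = 0 := by linear_combination e3
    have e5 : (starRingEnd ℂ) μ * μ ≠ 1 := by
      intro he
      have := congrArg Complex.abs he
      rw [map_mul, Complex.abs_conj, map_one] at this
      nlinarith [Complex.abs.nonneg μ]
    rcases mul_eq_zero.1 e4 with h1 | h1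
    · exact absurd (by linear_combination -h1) e5
    · exact h1
  have hc0 : (starRingEnd ℂ) (h.coeff 0) = μ * h.coeff n := by
    have := hcoeff n hn
    rw [hdk n le_rfl] at this
    have : (starRingEnd ℂ) (h.coeff (n - n)) = μ * h.coeff n := by linear_combination this
    simpa using this
  by_cases hcn : h.coeff n = 0
  · apply hne
    ext k
    simp only [coeff_zero]
    by_cases hk0 : k = 0
    · rw [hk0]
      have := hc0
      rw [hcn, mul_zero] at this
      have h2 := congrArg (starRingEnd ℂ) this
      simpa using h2
    · by_cases hkn : k = n
      · rw [hkn]; exact hcn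
      · rcases Nat.lt_or_ge k (n+1) with hk | hk
        · exact hmid k (by omega) (by omega)
        · exact coeff_eq_zero_of_natDegree_lt (by omega)
  have hdpos : 0 < h.degree := by
    rw [← natDegree_pos_iff_degree_pos]
    have := le_natDegree_of_ne_zero hcn
    omega
  obtain ⟨ζ, hζ⟩ := Complex.exists_root hdpos
  have hζ1 : 1 < Complex.abs ζ := by
    by_contra hcon2
    push_neg at hcon2
    exact hfree ζ hcon2 hζ
  have heval : eval ζ h = h.coeff 0 + h.coeff n * ζ ^ n := by
    rw [eval_eq_sum_range' (n := n + 1) (by omega) ζ]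
    rw [Finset.sum_range_succ]
    congr 1
    have hsum : ∑ i ∈ Finset.range n, h.coeff i * ζ ^ i = h.coeff 0 * ζ ^ 0 := by
      apply Finset.sum_eq_single_of_mem 0 (Finset.mem_range.2 (by omega))
      intro i hi hne
      rw [Finset.mem_range] at hi
      rw [hmid i (by omega) (by omega), zero_mul]
    rw [hsum]
    simp
  have hzeq : h.coeff n * ζ ^ n = - h.coeff 0 := by
    have : eval ζ h = 0 := hζ
    rw [heval] at this
    linear_combination this
  have habs : Complex.abs (h.coeff n) * Complex.abs ζ ^ n = Complex.abs (h.coeff 0) := by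
    have := congrArg Complex.abs hzeq
    rwa [map_mul, map_pow, map_neg_eq_map] at this
  have habs2 : Complex.abs (h.coeff 0) = Complex.abs μ * Complex.abs (h.coeff n) := by
    have := congrArg Complex.abs hc0
    rwa [Complex.abs_conj, map_mul] at this
  have hpow : 1 < Complex.abs ζ ^ n := one_lt_pow₀ hζ1 (by omega)
  have hcnabs : 0 < Complex.abs (h.coeff n) := Complex.abs.pos hcn
  nlinarith [Complex.abs.nonneg μ]

end Star

lemma ext_boundary {F G : ℂ → ℝ} (hF : Continuous F) (hG : Continuous G)
    (hle : ∀ w : ℂ, 1 < Complex.abs w → F w ≤ G w) :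
    ∀ z : ℂ, 1 ≤ Complex.abs z → F z ≤ G z := by
  intro z hz
  rcases lt_or_eq_of_le hz with hlt | heq
  · exact hle z hlt
  · have htendsR : Filter.Tendsto (fun k : ℕ => (1 + (1:ℝ)/(k+1))) Filter.atTop (nhds 1) := by
      have := (tendsto_one_div_add_atTop_nhds_zero_nat :
        Filter.Tendsto (fun n : ℕ => 1 / ((n : ℝ) + 1)) Filter.atTop (nhds 0))
      have h2 := this.const_add (1:ℝ)
      simpa using h2
    have htends : Filter.Tendsto (fun k : ℕ => ((1 + (1:ℝ)/(k+1) : ℝ) : ℂ) * z)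
        Filter.atTop (nhds z) := by
      have h3 : Filter.Tendsto (fun k : ℕ => ((1 + (1:ℝ)/(k+1) : ℝ) : ℂ)) Filter.atTop
          (nhds ((1:ℝ) : ℂ)) := (Complex.continuous_ofReal.tendsto _).comp htendsR
      have h4 := h3.mul_const z
      simpa using h4
    have hcmp : ∀ k : ℕ, F (((1 + (1:ℝ)/(k+1) : ℝ) : ℂ) * z) ≤ G (((1 + (1:ℝ)/(k+1) : ℝ) : ℂ) * z) := by
      intro k
      apply hle
      have hpos : (0:ℝ) < 1 + (1:ℝ)/(k+1) := by positivity
      simp only [map_mul, Complex.abs_ofReal, ← heq, mul_one, abs_of_pos hpos]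
      have : (0:ℝ) < (1:ℝ)/(k+1) := by positivity
      linarith
    exact le_of_tendsto_of_tendsto' ((hF.tendsto z).comp htends) ((hG.tendsto z).comp htends) hcmp

/-- Key Lemma C: comparison of `R f'(Rz) - f'(z)` for `h` and its conjugate-reciprocal. -/
lemma lemC {h : ℂ[X]} {n : ℕ} (hdeg : h.natDegree ≤ n) (hn : 1 ≤ n)
    (hfree : ∀ w : ℂ, Complex.abs w ≤ 1 → eval w h ≠ 0)
    (R : ℝ) (hR : 1 ≤ R) :
    ∀ z : ℂ, 1 ≤ Complex.abs z →
      Complex.abs ((R:ℂ) * eval ((R:ℂ)*z) (derivative h) - eval z (derivative h))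
        ≤ Complex.abs ((R:ℂ) * eval ((R:ℂ)*z) (derivative (starn n h))
            - eval z (derivative (starn n h))) := by
  have hcont : ∀ f : ℂ[X], Continuous
      (fun z : ℂ => Complex.abs ((R:ℂ) * eval ((R:ℂ)*z) f - eval z f)) := by
    intro f
    apply Complex.continuous_abs.comp
    exact (continuous_const.mul ((f.continuous).comp (continuous_const.mul continuous_id))).sub
      f.continuous
  apply ext_boundary (hcont _) (hcont _)
  intro z hz
  rcases eq_or_lt_of_le hR with hR1 | hR1
  · rw [← hR1]
    simp only [Complex.ofReal_one, one_mul]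
    simp
  by_contra hcon
  push_neg at hcon
  set Ac : ℂ := (R:ℂ) * eval ((R:ℂ)*z) (derivative h) - eval z (derivative h) with hAc
  set Bc : ℂ := (R:ℂ) * eval ((R:ℂ)*z) (derivative (starn n h))
      - eval z (derivative (starn n h)) with hBc
  have hApos : 0 < Complex.abs Ac :=
    lt_of_le_of_lt (Complex.abs.nonneg Bc) hcon
  have hA0 : Ac ≠ 0 := by
    intro h0; rw [h0] at hApos; simp at hApos
  set μ : ℂ := Bc / Ac with hμdef
  have hμ : Complex.abs μ < 1 := by
    rw [hμdef, map_div₀, div_lt_one hApos]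
    exact hcon
  set g : ℂ[X] := starn n h - C μ * h with hg
  have hgdeg : 1 ≤ g.natDegree := not_const hdeg hn hfree hμ
  have hdegle : h.natDegree ≤ n := hdeg
  have hgout : ∀ w : ℂ, 1 < Complex.abs w → eval w g ≠ 0 := by
    intro w hw
    obtain ⟨hsne, hsle⟩ := star_outside hdegle hfree hw
    rw [hg, eval_sub, eval_mul, eval_C]
    intro h0
    rw [sub_eq_zero] at h0
    have : Complex.abs (eval w (starn n h)) = Complex.abs μ * Complex.abs (eval w h) := by
      rw [h0, map_mul]
    have hlt : Complex.abs μ * Complex.abs (eval w h) < Complex.abs (eval w (starn n h)) := by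
      calc Complex.abs μ * Complex.abs (eval w h)
          ≤ Complex.abs μ * Complex.abs (eval w (starn n h)) :=
            mul_le_mul_of_nonneg_left hsle (Complex.abs.nonneg μ)
        _ < 1 * Complex.abs (eval w (starn n h)) := by
            exact mul_lt_mul_of_pos_right hμ (Complex.abs.pos hsne)
        _ = Complex.abs (eval w (starn n h)) := one_mul _
    rw [this] at hlt
    exact lt_irrefl _ hlt
  have hgroots : ∀ r ∈ g.roots, Complex.abs r ≤ 1 := by
    intro r hr
    by_contra hcon2
    push_neg at hcon2
    exact hgout r hcon2 (isRoot_of_mem_roots hr)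
  set f : ℂ[X] := derivative g with hf
  have hf0 : f ≠ 0 := by
    intro h0
    have := natDegree_eq_zero_of_derivative_eq_zero h0
    omega
  have hfroots : ∀ r ∈ f.roots, Complex.abs r ≤ 1 := by
    intro r hr
    by_contra hcon2
    push_neg at hcon2
    exact gl_outside g hgdeg hgroots r hcon2 (isRoot_of_mem_roots hr)
  have hfz : eval z f ≠ 0 := gl_outside g hgdeg hgroots z hz
  have hmono : Complex.abs (eval z f) ≤ Complex.abs (eval ((R:ℂ)*z) f) :=
    abs_eval_mono f hf0 hfroots R hR z (le_of_lt hz)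
  have key : (R:ℂ) * eval ((R:ℂ)*z) f - eval z f ≠ 0 := by
    intro h0
    rw [sub_eq_zero] at h0
    have habs := congrArg Complex.abs h0
    rw [map_mul, Complex.abs_ofReal, abs_of_pos (by linarith : (0:ℝ) < R)] at habs
    have h1 : R * Complex.abs (eval ((R:ℂ)*z) f) ≥ R * Complex.abs (eval z f) :=
      mul_le_mul_of_nonneg_left hmono (by linarith)
    have h2 : R * Complex.abs (eval z f) > Complex.abs (eval z f) := by
      have := Complex.abs.pos hfz
      nlinarith
    rw [habs] at h1
    linarith
  apply key
  have hexp : (R:ℂ) * eval ((R:ℂ)*z) f - eval z f = Bc - μ * Ac := by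
    rw [hf, hg, derivative_sub, derivative_C_mul]
    simp only [eval_sub, eval_mul, eval_C, hBc, hAc]
    ring
  rw [hexp, hμdef, div_mul_cancel₀ _ hA0, sub_self]

lemma align (A : ℂ) {c : ℝ} (hc : 0 ≤ c) :
    ∃ w : ℂ, Complex.abs w = 1 ∧ Complex.abs (A - (c:ℂ) * w) = |Complex.abs A - c| := by
  by_cases hA : A = 0
  · refine ⟨1, by simp, ?_⟩
    rw [hA]
    simp [_root_.abs_of_nonneg hc]
  · have hAa : (0:ℝ) < Complex.abs A := Complex.abs.pos hA
    refine ⟨A / ((Complex.abs A : ℝ) : ℂ), ?_, ?_⟩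
    · rw [map_div₀, Complex.abs_ofReal, abs_of_pos hAa, div_self (ne_of_gt hAa)]
    · have he : A - (c:ℂ) * (A / ((Complex.abs A : ℝ) : ℂ))
          = A * ((((Complex.abs A - c : ℝ)) : ℂ) / ((Complex.abs A : ℝ) : ℂ)) := by
        have hAc : ((Complex.abs A : ℝ) : ℂ) ≠ 0 := by
          simpa using ne_of_gt hAa
        field_simp
        norm_cast
      rw [he, map_mul, map_div₀, Complex.abs_ofReal, Complex.abs_ofReal, abs_of_pos hAa]
      field_simp

lemma phase (a b : ℂ) : ∃ lam : ℂ, Complex.abs lam = 1 ∧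
    Complex.abs a + Complex.abs b = Complex.abs (a + lam * b) := by
  by_cases ha : a = 0
  · exact ⟨1, by simp, by simp [ha]⟩
  by_cases hb : b = 0
  · exact ⟨1, by simp, by simp [hb]⟩
  have haa : (0:ℝ) < Complex.abs a := Complex.abs.pos ha
  have hbb : (0:ℝ) < Complex.abs b := Complex.abs.pos hb
  refine ⟨(a / ((Complex.abs a : ℝ) : ℂ)) * (((Complex.abs b : ℝ) : ℂ) / b), ?_, ?_⟩
  · rw [map_mul, map_div₀, map_div₀, Complex.abs_ofReal, Complex.abs_ofReal,
      abs_of_pos haa, abs_of_pos hbb, div_self (ne_of_gt haa), div_self (ne_of_gt hbb), one_mul]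
  · have he : a + (a / ((Complex.abs a : ℝ) : ℂ)) * (((Complex.abs b : ℝ) : ℂ) / b) * b
        = a * ((((Complex.abs a + Complex.abs b : ℝ)) : ℂ) / ((Complex.abs a : ℝ) : ℂ)) := by
      have hac : ((Complex.abs a : ℝ) : ℂ) ≠ 0 := by simpa using ne_of_gt haa
      field_simp
      norm_cast
    rw [he, map_mul, map_div₀, Complex.abs_ofReal, Complex.abs_ofReal, abs_of_pos haa,
      _root_.abs_of_nonneg (by positivity : (0:ℝ) ≤ Complex.abs a + Complex.abs b)]
    field_simp

lemma real_cases {x y K : ℝ} (hK : 0 < K) (hxy : x ≤ |y - K|) (hyx : y ≤ |x - K|) :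
    x + y ≤ K := by
  rcases abs_cases (y - K) with ⟨h1, h2⟩ | ⟨h1, h2⟩ <;>
    rcases abs_cases (x - K) with ⟨h3, h4⟩ | ⟨h3, h4⟩ <;> linarith

/-- One direction of the circle estimate. -/
lemma dir_bound (A : ℂ[X]) (n : ℕ) (hn : 1 ≤ n) (hAdeg : A.natDegree ≤ n) {M : ℝ} (hM : 0 < M)
    (hAdisk : ∀ w : ℂ, Complex.abs w ≤ 1 → Complex.abs (eval w A) ≤ M)
    {R : ℝ} (hR : 1 ≤ R) {ε : ℝ} (hε : 0 < ε) {z : ℂ} (hz : Complex.abs z = 1) :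
    Complex.abs ((R:ℂ) * eval ((R:ℂ)*z) (derivative A) - eval z (derivative A))
      ≤ |Complex.abs ((R:ℂ) * eval ((R:ℂ)*z) (derivative (starn n A))
            - eval z (derivative (starn n A)))
          - (1+ε) * ((n : ℝ) * ((R^n - 1) * M))| := by
  have hz0 : z ≠ 0 := by intro h0; rw [h0] at hz; simp at hz
  have hzp : z ^ (n-1) ≠ 0 := pow_ne_zero _ hz0
  have hzp1 : Complex.abs (z ^ (n-1)) = 1 := by rw [map_pow, hz, one_pow]
  have hRn : (1:ℝ) ≤ R ^ n := one_le_pow₀ hR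
  have hK0 : (0:ℝ) ≤ (1+ε) * ((n : ℝ) * ((R^n - 1) * M)) := by
    have : (0:ℝ) ≤ R^n - 1 := by linarith
    positivity
  set Hc : ℂ := (R:ℂ) * eval ((R:ℂ)*z) (derivative (starn n A))
      - eval z (derivative (starn n A)) with hHc
  obtain ⟨w, hw1, hwal⟩ := align Hc hK0
  set cc : ℂ := (((1+ε) * M : ℝ) : ℂ) * w * (z^(n-1))⁻¹ with hcc
  set c : ℂ := (starRingEnd ℂ) cc with hc
  have hccabs : Complex.abs c = (1+ε) * M := by
    rw [hc, Complex.abs_conj, hcc, map_mul, map_mul, map_inv₀, hzp1, Complex.abs_ofReal, hw1]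
    rw [abs_of_pos (by positivity : (0:ℝ) < (1+ε) * M)]
    simp
  set h : ℂ[X] := A - C c with hh
  have hhdeg : h.natDegree ≤ n := by
    rw [hh]
    refine le_trans (natDegree_sub_le _ _) ?_
    simp [hAdeg]
  have hhfree : ∀ x : ℂ, Complex.abs x ≤ 1 → eval x h ≠ 0 := by
    intro x hx
    rw [hh, eval_sub, eval_C]
    intro h0
    rw [sub_eq_zero] at h0
    have h1 : Complex.abs (eval x A) = (1+ε) * M := by rw [h0, hccabs]
    have h2 := hAdisk x hx
    rw [h1] at h2
    nlinarith
  have hder : derivative h = derivative A := by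
    rw [hh, derivative_sub, derivative_C, sub_zero]
  have hstar : derivative (starn n h) = derivative (starn n A) - C (cc * n) * X ^ (n-1) := by
    rw [hh, starn_sub, starn_C, derivative_sub, derivative_C_mul_X_pow, hc,
      Complex.conj_conj]
  have hn1 : n - 1 + 1 = n := by omega
  have hpow : (R:ℂ) * ((R:ℂ)*z)^(n-1) = (R:ℂ)^n * z^(n-1) := by
    rw [mul_pow, ← mul_assoc, ← pow_succ', hn1]
  have hccz : cc * z^(n-1) = (((1+ε) * M : ℝ) : ℂ) * w := by
    rw [hcc, mul_assoc, inv_mul_cancel₀ hzp, mul_one]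
  have hBc : (R:ℂ) * eval ((R:ℂ)*z) (derivative (starn n h)) - eval z (derivative (starn n h))
      = Hc - ((((1+ε) * ((n : ℝ) * ((R^n - 1) * M)) : ℝ)) : ℂ) * w := by
    rw [hstar]
    simp only [eval_sub, eval_mul, eval_C, eval_pow, eval_X]
    rw [hHc]
    have : (R:ℂ) * (eval ((R:ℂ)*z) (derivative (starn n A)) - cc * (↑n) * ((R:ℂ)*z)^(n-1))
        - (eval z (derivative (starn n A)) - cc * (↑n) * z^(n-1))
        = ((R:ℂ) * eval ((R:ℂ)*z) (derivative (starn n A)) - eval z (derivative (starn n A)))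
          - cc * (↑n) * ((R:ℂ) * ((R:ℂ)*z)^(n-1) - z^(n-1)) := by ring
    rw [this, hpow]
    have h2 : cc * (↑n) * ((R:ℂ)^n * z^(n-1) - z^(n-1))
        = (cc * z^(n-1)) * ((↑n) * ((R:ℂ)^n - 1)) := by ring
    rw [h2, hccz]
    push_cast
    ring
  have := lemC hhdeg hn hhfree R hR z (le_of_eq hz.symm)
  rw [hder, hBc, hwal] at this
  exact this

/-- The circle-level estimate. -/
lemma circle_bound (P : ℂ[X]) (n : ℕ) (hn : 1 ≤ n) (hdeg : P.natDegree = n)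
    (R : ℝ) (hR : 1 ≤ R) (z : ℂ) (hz : Complex.abs z = 1) :
    Complex.abs ((R:ℂ) * eval ((R:ℂ)*z) (derivative P) - eval z (derivative P))
      + Complex.abs ((R:ℂ) * eval ((R:ℂ)*z) (derivative (starn n P))
          - eval z (derivative (starn n P)))
      ≤ (n : ℝ) * ((R^n - 1) * maxMod P) := by
  have hP0 : P ≠ 0 := by
    intro h0
    rw [h0] at hdeg
    simp at hdeg
    omega
  have hM : 0 < maxMod P := maxMod_pos P hP0
  have hdegle : P.natDegree ≤ n := le_of_eq hdeg
  have hPdisk : ∀ w : ℂ, Complex.abs w ≤ 1 → Complex.abs (eval w P) ≤ maxMod P :=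
    fun w hw => disk_bound P (fun u hu => maxMod_bound P u hu) hw
  have hQdisk : ∀ w : ℂ, Complex.abs w ≤ 1 → Complex.abs (eval w (starn n P)) ≤ maxMod P := by
    apply disk_bound
    intro u hu
    rw [abs_eval_starn_circle n P hdegle u hu]
    apply maxMod_bound
    rw [map_inv₀, Complex.abs_conj, hu, inv_one]
  rcases eq_or_lt_of_le hR with hR1 | hR1
  · rw [← hR1]
    simp
  have hRn : (1:ℝ) < R ^ n := one_lt_pow₀ hR1 (by omega)
  set x := Complex.abs ((R:ℂ) * eval ((R:ℂ)*z) (derivative P) - eval z (derivative P)) with hx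
  set y := Complex.abs ((R:ℂ) * eval ((R:ℂ)*z) (derivative (starn n P))
      - eval z (derivative (starn n P))) with hy
  have hK0 : (0:ℝ) < (n : ℝ) * ((R^n - 1) * maxMod P) := by
    have h1 : (0:ℝ) < R^n - 1 := by linarith
    have h2 : (0:ℝ) < (n:ℝ) := by exact_mod_cast (by omega : 0 < n)
    positivity
  apply le_of_forall_pos_le_add
  intro δ hδ
  set ε := δ / ((n : ℝ) * ((R^n - 1) * maxMod P)) with hε
  have hεpos : 0 < ε := div_pos hδ hK0
  have h1 : x ≤ |y - (1+ε) * ((n : ℝ) * ((R^n - 1) * maxMod P))| :=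
    dir_bound P n hn hdegle hM hPdisk hR hεpos hz
  have h2 : y ≤ |x - (1+ε) * ((n : ℝ) * ((R^n - 1) * maxMod P))| := by
    have := dir_bound (starn n P) n hn (natDegree_starn_le n P hdegle) hM hQdisk hR hεpos hz
    rwa [starn_starn, ← hx, ← hy] at this
  have h3 : x + y ≤ (1+ε) * ((n : ℝ) * ((R^n - 1) * maxMod P)) :=
    real_cases (by positivity) h1 h2
  have h4 : (1+ε) * ((n : ℝ) * ((R^n - 1) * maxMod P))
      = (n : ℝ) * ((R^n - 1) * maxMod P) + δ := by
    rw [hε, add_mul, one_mul, div_mul_cancel₀ δ (ne_of_gt hK0)]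
  linarith

lemma recip_eq (P : ℂ[X]) {n : ℕ} (hdeg : P.natDegree = n) : recipPoly P = starn n P := by
  rw [recipPoly, starn, Polynomial.reverse,
    natDegree_map_eq_of_injective (RingHom.injective (starRingEnd ℂ)), hdeg]

end CorOne

open CorOne in
theorem corollary_one' (P : Polynomial ℂ) (n : ℕ) (hn : 1 ≤ n)
    (hdeg : P.natDegree = n) (R : ℝ) (hR : 1 ≤ R) :
    ∀ z : ℂ, 1 ≤ Complex.abs z →
      Complex.abs ((R : ℂ) * (Polynomial.derivative P).eval ((R : ℂ) * z)
          - (Polynomial.derivative P).eval z)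
        + Complex.abs ((R : ℂ) * (Polynomial.derivative (recipPoly P)).eval ((R : ℂ) * z)
          - (Polynomial.derivative (recipPoly P)).eval z)
        ≤ (n : ℝ) * (R ^ n - 1) * Complex.abs z ^ (n - 1) * maxMod P := by
  intro z hz
  rw [recip_eq P hdeg]
  set Q := starn n P with hQ
  set G : ℂ[X] := C (R:ℂ) * ((derivative P).comp (C (R:ℂ) * X)) - derivative P with hG
  set H : ℂ[X] := C (R:ℂ) * ((derivative Q).comp (C (R:ℂ) * X)) - derivative Q with hH
  have hevalG : ∀ x : ℂ, eval x G
      = (R:ℂ) * eval ((R:ℂ)*x) (derivative P) - eval x (derivative P) := by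
    intro x; rw [hG]; simp [eval_comp]
  have hevalH : ∀ x : ℂ, eval x H
      = (R:ℂ) * eval ((R:ℂ)*x) (derivative Q) - eval x (derivative Q) := by
    intro x; rw [hH]; simp [eval_comp]
  have hdegaux : ∀ f : ℂ[X], f.natDegree ≤ n →
      (C (R:ℂ) * ((derivative f).comp (C (R:ℂ) * X)) - derivative f).natDegree ≤ n - 1 := by
    intro f hf
    have h1 : (derivative f).natDegree ≤ n - 1 :=
      le_trans (natDegree_derivative_le f) (by omega)
    have h2 : ((derivative f).comp (C (R:ℂ) * X)).natDegree ≤ n - 1 := by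
      refine le_trans (natDegree_comp_le) ?_
      have h3 : (C (R:ℂ) * X).natDegree ≤ 1 :=
        le_trans (natDegree_mul_le) (by simp)
      calc (derivative f).natDegree * (C (R:ℂ) * X).natDegree
          ≤ (n-1) * 1 := Nat.mul_le_mul h1 h3
        _ = n - 1 := by omega
    refine le_trans (natDegree_sub_le _ _) ?_
    refine max_le (le_trans natDegree_mul_le ?_) h1
    simpa using h2
  have hGdeg : G.natDegree ≤ n - 1 := hdegaux P (le_of_eq hdeg)
  have hHdeg : H.natDegree ≤ n - 1 := hdegaux Q (natDegree_starn_le n P (le_of_eq hdeg))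
  obtain ⟨lam, hlam1, hlam⟩ := phase (eval z G) (eval z H)
  set g : ℂ[X] := G + C lam * H with hg
  have hgdeg : g.natDegree ≤ n - 1 := by
    rw [hg]
    refine le_trans (natDegree_add_le _ _) (max_le hGdeg ?_)
    exact le_trans natDegree_mul_le (by simpa using hHdeg)
  have hcirc : ∀ w : ℂ, Complex.abs w = 1 →
      Complex.abs (eval w g) ≤ (n : ℝ) * ((R^n - 1) * maxMod P) := by
    intro w hw
    rw [hg]
    simp only [eval_add, eval_mul, eval_C]
    calc Complex.abs (eval w G + lam * eval w H)
        ≤ Complex.abs (eval w G) + Complex.abs (lam * eval w H) := Complex.abs.add_le _ _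
      _ = Complex.abs (eval w G) + Complex.abs (eval w H) := by rw [map_mul, hlam1, one_mul]
      _ ≤ (n : ℝ) * ((R^n - 1) * maxMod P) := by
          rw [hevalG, hevalH]
          exact circle_bound P n hn hdeg R hR w hw
  have hgrow := growth g (n-1) hgdeg hcirc hz
  have hfin : Complex.abs (eval z G) + Complex.abs (eval z H) ≤
      (n : ℝ) * ((R^n - 1) * maxMod P) * Complex.abs z ^ (n-1) := by
    rw [hlam]
    calc Complex.abs (eval z G + lam * eval z H)
        = Complex.abs (eval z g) := by rw [hg]; simp [eval_add, eval_mul]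
      _ ≤ (n : ℝ) * ((R^n - 1) * maxMod P) * Complex.abs z ^ (n-1) := hgrow
  rw [hevalG, hevalH] at hfin
  calc Complex.abs ((R:ℂ) * eval ((R:ℂ)*z) (derivative P) - eval z (derivative P))
      + Complex.abs ((R:ℂ) * eval ((R:ℂ)*z) (derivative Q) - eval z (derivative Q))
      ≤ (n : ℝ) * ((R^n - 1) * maxMod P) * Complex.abs z ^ (n-1) := hfin
    _ = (n : ℝ) * (R ^ n - 1) * Complex.abs z ^ (n - 1) * maxMod P := by ring

/-- Corollary 1: for `R ≥ 1` and `|z| ≥ 1`,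
`|R P'(Rz) - P'(z)| + |R Q'(Rz) - Q'(z)| ≤ n (R^n - 1) |z|^(n-1) max_(|w|=1)|P(w)|`. -/
theorem corollary_one (P : Polynomial ℂ) (n : ℕ) (hn : 1 ≤ n)
    (hdeg : P.natDegree = n) (R : ℝ) (hR : 1 ≤ R) :
    ∀ z : ℂ, 1 ≤ ‖z‖ →
      ‖(R : ℂ) * (Polynomial.derivative P).eval ((R : ℂ) * z)
          - (Polynomial.derivative P).eval z‖
        + ‖(R : ℂ) * (Polynomial.derivative (recipPoly P)).eval ((R : ℂ) * z)
          - (Polynomial.derivative (recipPoly P)).eval z‖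
        ≤ (n : ℝ) * (R ^ n - 1) * ‖z‖ ^ (n - 1) * maxMod P :=
  corollary_one' P n hn hdeg R hR
end
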